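/- arXiv:0808.2173 — 5 statements merged into one kernel-verified Lean document; each statement's English description precedes it below -/
import Mathlib

section
/- Let n = 3 or n ≥ 5, and let Γ be a connected bichromatic graph which is locally like W(B_n). Then Γ is isomorphic, as a bichromatic graph, to W(B_n). -/
def WB (n : ℕ) : SimpleGraph (Fin n × Fin n) where
  Adj p q :=
    p ≠ q ∧ (({p.1, p.2} : Set (Fin n)) ∩ {q.1, q.2} = ∅ ∨ (q.1 = p.2 ∧ q.2 = p.1))
  symm := by
    constructor
    rintro ⟨a, b⟩ ⟨c, d⟩ ⟨hne, h⟩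
    refine ⟨hne.symm, ?_⟩
    rcases h with h | ⟨h1, h2⟩
    · left; rw [Set.inter_comm] at h; exact h
    · right; exact ⟨h2.symm, h1.symm⟩
  loopless := by constructor; rintro ⟨a, b⟩ ⟨hne, _⟩; exact hne rfl

def WBcolor (n : ℕ) (p : Fin n × Fin n) : Bool := decide (p.1 = p.2)

def BIso {V : Type*} {W : Type*} (G : SimpleGraph V) (cG : V → Bool)
    (H : SimpleGraph W) (cH : W → Bool) : Prop :=
  ∃ e : G ≃g H, ∀ v : V, cH (e v) = cG v

/-- The vertex `y_{1,1}` of `WB n`, a short vertex. -/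
def shortWBvertex (n : ℕ) (hn : 2 ≤ n) : Fin n × Fin n := (⟨0, by omega⟩, ⟨0, by omega⟩)

/-- The vertex `y_{1,2}` of `WB n`, a long vertex. -/
def longWBvertex (n : ℕ) (hn : 2 ≤ n) : Fin n × Fin n := (⟨0, by omega⟩, ⟨1, by omega⟩)

/-- A bichromatic graph is locally like `W(Bₙ)` if the local graph at every short vertex is
isomorphic (as a bichromatic graph) to the local graph of `W(Bₙ)` at `y_{1,1}` and the local
graph at every long vertex is isomorphic to the local graph of `W(Bₙ)` at `y_{1,2}`. -/
def LocallyLikeWBn {V : Type*} (G : SimpleGraph V) (c : V → Bool) (n : ℕ) (hn : 2 ≤ n) : Prop :=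
  ∀ v : V,
    (c v = true → BIso (G.induce (G.neighborSet v)) (fun x => c x.1)
      ((WB n).induce ((WB n).neighborSet (shortWBvertex n hn))) (fun x => WBcolor n x.1)) ∧
    (c v = false → BIso (G.induce (G.neighborSet v)) (fun x => c x.1)
      ((WB n).induce ((WB n).neighborSet (longWBvertex n hn))) (fun x => WBcolor n x.1))

lemma WB_adj {n : ℕ} (p q : Fin n × Fin n) :
    (WB n).Adj p q ↔ p ≠ q ∧ ((p.1 ≠ q.1 ∧ p.1 ≠ q.2 ∧ p.2 ≠ q.1 ∧ p.2 ≠ q.2) ∨ (q.1 = p.2 ∧ q.2 = p.1)) := by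
  show (p ≠ q ∧ _) ↔ _
  rw [Set.eq_empty_iff_forall_notMem]
  constructor
  · rintro ⟨h1, h2⟩
    refine ⟨h1, ?_⟩
    rcases h2 with h | h
    · left
      refine ⟨?_, ?_, ?_, ?_⟩ <;> intro e
      · exact h q.1 (by simp [e])
      · exact h q.2 (by simp [e])
      · exact h q.1 (by simp [e.symm])
      · exact h q.2 (by simp [e.symm])
    · right; exact h
  · rintro ⟨h1, h2⟩
    refine ⟨h1, ?_⟩
    rcases h2 with ⟨a, b, c, d⟩ | h
    · left; intro z hz
      simp only [Set.mem_inter_iff, Set.mem_insert_iff, Set.mem_singleton_iff] at hz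
      rcases hz with ⟨hz1 | hz1, hz2 | hz2⟩ <;> subst hz1 <;> simp_all
    · right; exact h

lemma WBcolor_iff {n : ℕ} (p : Fin n × Fin n) : WBcolor n p = true ↔ p.1 = p.2 := by
  simp [WBcolor]

lemma WBcolor_iff' {n : ℕ} (p : Fin n × Fin n) : WBcolor n p = false ↔ p.1 ≠ p.2 := by
  simp [WBcolor]

lemma nbr11 {n : ℕ} (hn : 2 ≤ n) (p : Fin n × Fin n) :
    (WB n).Adj (shortWBvertex n hn) p ↔ p.1 ≠ ⟨0, by omega⟩ ∧ p.2 ≠ ⟨0, by omega⟩ := by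
  rw [WB_adj]
  unfold shortWBvertex
  constructor
  · rintro ⟨h1, ⟨a,b,c,d⟩ | ⟨a, b⟩⟩
    · exact ⟨fun e => a e.symm, fun e => b e.symm⟩
    · exact absurd (Prod.ext_iff.mpr ⟨a.symm, b.symm⟩) h1
  · rintro ⟨h1, h2⟩
    refine ⟨fun e => h1 (by rw [← e]), Or.inl ⟨fun e => h1 e.symm, fun e => h2 e.symm, fun e => h1 e.symm, fun e => h2 e.symm⟩⟩

lemma nbr12 {n : ℕ} (hn : 2 ≤ n) (p : Fin n × Fin n) :
    (WB n).Adj (longWBvertex n hn) p ↔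
      ((p.1 ≠ ⟨0, by omega⟩ ∧ p.1 ≠ ⟨1, by omega⟩ ∧ p.2 ≠ ⟨0, by omega⟩ ∧ p.2 ≠ ⟨1, by omega⟩)
        ∨ (p.1 = ⟨1, by omega⟩ ∧ p.2 = ⟨0, by omega⟩)) := by
  rw [WB_adj]
  unfold longWBvertex
  constructor
  · rintro ⟨h1, ⟨a,b,c,d⟩ | ⟨a, b⟩⟩
    · exact Or.inl ⟨fun e => a e.symm, fun e => c e.symm, fun e => b e.symm, fun e => d e.symm⟩
    · exact Or.inr ⟨a, b⟩
  · rintro (⟨a,b,c,d⟩ | ⟨a, b⟩)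
    · refine ⟨fun e => a (by rw [← e]), Or.inl ⟨fun e => a e.symm, fun e => c e.symm, fun e => b e.symm, fun e => d e.symm⟩⟩
    · refine ⟨fun e => ?_, Or.inr ⟨a, b⟩⟩
      rw [← e] at b
      simp at b


theorem stmt2 (n : ℕ) (hn : n = 3 ∨ 5 ≤ n) {V : Type} (G : SimpleGraph V) (c : V → Bool)
    (hconn : G.Connected)
    (hloc : LocallyLikeWBn G c n (by rcases hn with h | h <;> omega)) :
    BIso G c (WB n) (WBcolor n) := by
  classical
  have hn3 : 3 ≤ n := by rcases hn with h|h <;> omega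
  have hn2 : 2 ≤ n := by omega
  choose es hes using fun x hx => (hloc x).1 hx
  choose el hel using fun x hx => (hloc x).2 hx
  set pf : 2 ≤ n := (by rcases hn with h | h <;> omega) with hpf
  -- short link labels
  let sl : ∀ x, c x = true → ∀ u, G.Adj x u → Fin n × Fin n :=
    fun x hx u h => ((es x hx) ⟨u, h⟩).1
  have sl_nbr : ∀ x hx u h, (WB n).Adj (shortWBvertex n pf) (sl x hx u h) :=
    fun x hx u h => ((es x hx) ⟨u, h⟩).2
  have sl_col : ∀ x hx u h, WBcolor n (sl x hx u h) = c u :=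
    fun x hx u h => hes x hx ⟨u, h⟩
  have sl_adj : ∀ x hx u h u' h', ((WB n).Adj (sl x hx u h) (sl x hx u' h') ↔ G.Adj u u') :=
    fun x hx u h u' h' => (es x hx).map_adj_iff
  have sl_inj : ∀ x hx u h u' h', sl x hx u h = sl x hx u' h' → u = u' := by
    intro x hx u h u' h' he
    have := (es x hx).injective (Subtype.ext he)
    exact congrArg Subtype.val this
  have sl_surj : ∀ x hx p, (WB n).Adj (shortWBvertex n pf) p → ∃ u h, sl x hx u h = p := by
    intro x hx p hp
    obtain ⟨u, hu⟩ := (es x hx).surjective ⟨p, hp⟩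
    exact ⟨u.1, u.2, by simp [sl, hu]⟩
  -- long link labels
  let ll : ∀ x, c x = false → ∀ u, G.Adj x u → Fin n × Fin n :=
    fun x hx u h => ((el x hx) ⟨u, h⟩).1
  have ll_nbr : ∀ x hx u h, (WB n).Adj (longWBvertex n pf) (ll x hx u h) :=
    fun x hx u h => ((el x hx) ⟨u, h⟩).2
  have ll_col : ∀ x hx u h, WBcolor n (ll x hx u h) = c u :=
    fun x hx u h => hel x hx ⟨u, h⟩
  have ll_adj : ∀ x hx u h u' h', ((WB n).Adj (ll x hx u h) (ll x hx u' h') ↔ G.Adj u u') :=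
    fun x hx u h u' h' => (el x hx).map_adj_iff
  have ll_inj : ∀ x hx u h u' h', ll x hx u h = ll x hx u' h' → u = u' := by
    intro x hx u h u' h' he
    have := (el x hx).injective (Subtype.ext he)
    exact congrArg Subtype.val this
  have ll_surj : ∀ x hx p, (WB n).Adj (longWBvertex n pf) p → ∃ u h, ll x hx u h = p := by
    intro x hx p hp
    obtain ⟨u, hu⟩ := (el x hx).surjective ⟨p, hp⟩
    exact ⟨u.1, u.2, by simp [ll, hu]⟩
  -- two distinct short link-neighbors of a short vertex are adjacent
  have Sclique : ∀ x (hx : c x = true) u u', c u = true → c u' = true →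
      G.Adj x u → G.Adj x u' → u ≠ u' → G.Adj u u' := by
    intro x hx u u' hu hu' h h' hne
    have hA := sl_nbr x hx u h
    have hB := sl_nbr x hx u' h'
    rw [nbr11 pf] at hA hB
    have dA : (sl x hx u h).1 = (sl x hx u h).2 :=
      (WBcolor_iff _).1 (by rw [sl_col]; exact hu)
    have dB : (sl x hx u' h').1 = (sl x hx u' h').2 :=
      (WBcolor_iff _).1 (by rw [sl_col]; exact hu')
    have hne1 : (sl x hx u h).1 ≠ (sl x hx u' h').1 := by
      intro e
      exact hne (sl_inj x hx u h u' h' (Prod.ext_iff.mpr ⟨e, by rw [← dA, ← dB]; exact e⟩))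
    refine (sl_adj x hx u h u' h').1 ?_
    rw [WB_adj]
    refine ⟨fun e => hne1 (by rw [e]), Or.inl ⟨hne1, ?_, ?_, ?_⟩⟩
    · rw [← dB]; exact hne1
    · rw [← dA]; exact hne1
    · rw [← dA, ← dB]; exact hne1
  -- two distinct short link-neighbors of a long vertex are adjacent
  have Lclique : ∀ x (hx : c x = false) u u', c u = true → c u' = true →
      G.Adj x u → G.Adj x u' → u ≠ u' → G.Adj u u' := by
    intro x hx u u' hu hu' h h' hne
    have hA := ll_nbr x hx u h
    have hB := ll_nbr x hx u' h'
    rw [nbr12 pf] at hA hB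
    have dA : (ll x hx u h).1 = (ll x hx u h).2 :=
      (WBcolor_iff _).1 (by rw [ll_col]; exact hu)
    have dB : (ll x hx u' h').1 = (ll x hx u' h').2 :=
      (WBcolor_iff _).1 (by rw [ll_col]; exact hu')
    have hA' : (ll x hx u h).1 ≠ ⟨0, by omega⟩ := by
      rcases hA with ⟨e, _⟩ | ⟨e1, e2⟩
      · exact e
      · rw [dA, e2] at e1; exact absurd e1 (by simp)
    have hB' : (ll x hx u' h').1 ≠ ⟨0, by omega⟩ := by
      rcases hB with ⟨e, _⟩ | ⟨e1, e2⟩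
      · exact e
      · rw [dB, e2] at e1; exact absurd e1 (by simp)
    have hne1 : (ll x hx u h).1 ≠ (ll x hx u' h').1 := by
      intro e
      exact hne (ll_inj x hx u h u' h' (Prod.ext_iff.mpr ⟨e, by rw [← dA, ← dB]; exact e⟩))
    refine (ll_adj x hx u h u' h').1 ?_
    rw [WB_adj]
    refine ⟨fun e => hne1 (by rw [e]), Or.inl ⟨hne1, ?_, ?_, ?_⟩⟩
    · rw [← dB]; exact hne1
    · rw [← dA]; exact hne1
    · rw [← dA, ← dB]; exact hne1
  have mkne : ∀ (a b : ℕ) (ha : a < n) (hb : b < n), a ≠ b → (⟨a, ha⟩ : Fin n) ≠ ⟨b, hb⟩ :=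
    fun a b ha hb h e => h (by injection e)
  have valne : ∀ (i : Fin n) (a : ℕ) (ha : a < n), i ≠ ⟨a, ha⟩ → i.val ≠ a :=
    fun i a ha h e => h (Fin.ext e)
  -- every long vertex has a short neighbor
  have LshortNbr : ∀ v (hv : c v = false), ∃ z, c z = true ∧ G.Adj v z := by
    intro v hv
    have hm : (WB n).Adj (longWBvertex n pf) (⟨2, by omega⟩, ⟨2, by omega⟩) := by
      rw [nbr12 pf]
      exact Or.inl ⟨mkne 2 0 _ _ (by omega), mkne 2 1 _ _ (by omega),
        mkne 2 0 _ _ (by omega), mkne 2 1 _ _ (by omega)⟩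
    obtain ⟨z, hz, he⟩ := ll_surj v hv _ hm
    refine ⟨z, ?_, hz⟩
    rw [← ll_col v hv z hz, he, WBcolor_iff]
  -- adjacent longs have a common short neighbor
  have Lcommon : ∀ v (hv : c v = false) w (hw : c w = false), G.Adj v w →
      ∃ z, c z = true ∧ G.Adj v z ∧ G.Adj w z := by
    intro v hv w hw h
    have hq := ll_nbr v hv w h
    rw [nbr12 pf] at hq
    rcases hq with ⟨h1, h2, h3, h4⟩ | ⟨h1, h2⟩
    · -- non-apex case: components of the label are ∉ {0,1}
      have hd : (ll v hv w h).1 ≠ (ll v hv w h).2 := by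
        rw [← WBcolor_iff']; rw [ll_col]; exact hw
      have hvi := valne _ _ _ h1
      have hvi' := valne _ _ _ h2
      have hvj := valne _ _ _ h3
      have hvj' := valne _ _ _ h4
      have hvij : (ll v hv w h).1.val ≠ (ll v hv w h).2.val := fun e => hd (Fin.ext e)
      have hn4 : 5 ≤ n := by
        rcases hn with h5 | h5
        · exfalso
          have := (ll v hv w h).1.isLt
          have := (ll v hv w h).2.isLt
          omega
        · exact h5
      -- pick k < n, k ∉ {0,1,i,j}
      obtain ⟨k, hk, hk0, hk1, hki, hkj⟩ :
          ∃ k, k < n ∧ k ≠ 0 ∧ k ≠ 1 ∧ k ≠ (ll v hv w h).1.val ∧ k ≠ (ll v hv w h).2.val := by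
        by_cases e2 : 2 ≠ (ll v hv w h).1.val ∧ 2 ≠ (ll v hv w h).2.val
        · exact ⟨2, by omega, by omega, by omega, e2.1, e2.2⟩
        by_cases e3 : 3 ≠ (ll v hv w h).1.val ∧ 3 ≠ (ll v hv w h).2.val
        · exact ⟨3, by omega, by omega, by omega, e3.1, e3.2⟩
        · refine ⟨4, by omega, by omega, by omega, ?_, ?_⟩ <;> omega
      have hm : (WB n).Adj (longWBvertex n pf) (⟨k, hk⟩, ⟨k, hk⟩) := by
        rw [nbr12 pf]
        exact Or.inl ⟨mkne k 0 _ _ hk0, mkne k 1 _ _ hk1, mkne k 0 _ _ hk0, mkne k 1 _ _ hk1⟩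
      obtain ⟨z, hz, he⟩ := ll_surj v hv _ hm
      refine ⟨z, by rw [← ll_col v hv z hz, he, WBcolor_iff], hz, ?_⟩
      refine (ll_adj v hv w h z hz).1 ?_
      rw [he, WB_adj]
      refine ⟨?_, Or.inl ⟨fun e => hki (by rw [e]), fun e => hki (by rw [e]),
        fun e => hkj (by rw [e]), fun e => hkj (by rw [e])⟩⟩
      intro e
      exact hki (by rw [Prod.ext_iff] at e; rw [e.1])
    · -- apex case: label is (1,0); take the short with label (2,2)
      have hm : (WB n).Adj (longWBvertex n pf) (⟨2, by omega⟩, ⟨2, by omega⟩) := by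
        rw [nbr12 pf]
        exact Or.inl ⟨mkne 2 0 _ _ (by omega), mkne 2 1 _ _ (by omega),
          mkne 2 0 _ _ (by omega), mkne 2 1 _ _ (by omega)⟩
      obtain ⟨z, hz, he⟩ := ll_surj v hv _ hm
      refine ⟨z, by rw [← ll_col v hv z hz, he, WBcolor_iff], hz, ?_⟩
      refine (ll_adj v hv w h z hz).1 ?_
      rw [he, WB_adj, h1, h2]
      refine ⟨?_, Or.inl ⟨mkne 1 2 _ _ (by omega), mkne 1 2 _ _ (by omega),
        mkne 0 2 _ _ (by omega), mkne 0 2 _ _ (by omega)⟩⟩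
      intro e
      rw [Prod.ext_iff] at e
      exact (mkne 1 2 (by omega) (by omega) (by omega)) (by rw [← h1, e.1])
  -- uniqueness of the "apex": a long link-neighbor adjacent to all short link-neighbors
  have Apex_unique : ∀ v (hv : c v = false) w w', c w = false → c w' = false →
      G.Adj v w → G.Adj v w' →
      (∀ s, c s = true → G.Adj v s → G.Adj w s) →
      (∀ s, c s = true → G.Adj v s → G.Adj w' s) → w = w' := by
    intro v hv w w' hw hw' h h' hall hall'
    have key : ∀ u (hu : c u = false) (hadj : G.Adj v u),
        (∀ s, c s = true → G.Adj v s → G.Adj u s) →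
        ll v hv u hadj = (⟨1, by omega⟩, ⟨0, by omega⟩) := by
      intro u hu hadj hall
      have hq := ll_nbr v hv u hadj
      rw [nbr12 pf] at hq
      rcases hq with ⟨h1, h2, h3, h4⟩ | ⟨h1, h2⟩
      · exfalso
        -- the short with label ((ll u).1, (ll u).1) is a short neighbor of v not adjacent to u
        have hm : (WB n).Adj (longWBvertex n pf) ((ll v hv u hadj).1, (ll v hv u hadj).1) := by
          rw [nbr12 pf]
          exact Or.inl ⟨h1, h2, h1, h2⟩
        obtain ⟨z, hz, he⟩ := ll_surj v hv _ hm
        have hzc : c z = true := by rw [← ll_col v hv z hz, he, WBcolor_iff]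
        have := (ll_adj v hv u hadj z hz).2 (hall z hzc hz)
        rw [he, WB_adj] at this
        rcases this with ⟨hne, ⟨e1, _⟩ | ⟨e1, e2⟩⟩
        · exact e1 rfl
        · have hd : (ll v hv u hadj).1 ≠ (ll v hv u hadj).2 := by
            rw [← WBcolor_iff']; rw [ll_col]; exact hu
          exact hd e1
      · exact Prod.ext_iff.mpr ⟨h1, h2⟩
    have e1 := key w hw h hall
    have e2 := key w' hw' h' hall'
    exact ll_inj v hv w h w' h' (by rw [e1, e2])
  -- a base short vertex
  obtain ⟨x0, hx0⟩ : ∃ x, c x = true := by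
    obtain ⟨v⟩ := hconn.nonempty
    cases hc : c v with
    | true => exact ⟨v, hc⟩
    | false => obtain ⟨z, hz, _⟩ := LshortNbr v hc; exact ⟨z, hz⟩
  -- closure: all shorts are in the clique of x0
  have sub1 : ∀ v, c v = true → (v = x0 ∨ G.Adj x0 v) → ∀ z, c z = true → G.Adj v z →
      (z = x0 ∨ G.Adj x0 z) := by
    intro v hv hvK z hz hzv
    rcases hvK with rfl | hvK
    · exact Or.inr hzv
    · by_cases hzx : z = x0
      · exact Or.inl hzx
      · exact Or.inr (Sclique v hv z x0 hz hx0 hzv hvK.symm hzx).symm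
  have step : ∀ v w,
      ((c v = true → (v = x0 ∨ G.Adj x0 v)) ∧
        (c v = false → ∀ z, c z = true → G.Adj v z → (z = x0 ∨ G.Adj x0 z))) → G.Adj v w →
      ((c w = true → (w = x0 ∨ G.Adj x0 w)) ∧
        (c w = false → ∀ z, c z = true → G.Adj w z → (z = x0 ∨ G.Adj x0 z))) := by
    intro v w hA hvw
    cases hcv : c v with
    | true =>
      have hvK := hA.1 hcv
      constructor
      · intro hcw
        exact sub1 v hcv hvK w hcw hvw
      · intro hcw z hz hzw
        by_cases hzv : z = v
        · subst hzv; exact hvK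
        · have : G.Adj z v := Lclique w hcw z v hz hcv hzw hvw.symm hzv
          exact sub1 v hcv hvK z hz this.symm
    | false =>
      have hsN := hA.2 hcv
      constructor
      · intro hcw
        exact hsN w hcw hvw
      · intro hcw z hz hzw
        obtain ⟨s, hs, hsv, hsw⟩ := Lcommon v hcv w hcw hvw
        have hsK := hsN s hs hsv
        by_cases hzs : z = s
        · subst hzs; exact hsK
        · have : G.Adj z s := Lclique w hcw z s hz hs hzw hsw hzs
          exact sub1 s hs hsK z hz this.symm
  have reach : ∀ u v (_ : G.Walk u v),
      ((c u = true → (u = x0 ∨ G.Adj x0 u)) ∧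
        (c u = false → ∀ z, c z = true → G.Adj u z → (z = x0 ∨ G.Adj x0 z))) →
      ((c v = true → (v = x0 ∨ G.Adj x0 v)) ∧
        (c v = false → ∀ z, c z = true → G.Adj v z → (z = x0 ∨ G.Adj x0 z))) := by
    intro u v p
    induction p with
    | nil => exact id
    | cons h _ ih => intro hu; exact ih (step _ _ hu h)
  have allA : ∀ v, ((c v = true → (v = x0 ∨ G.Adj x0 v)) ∧
      (c v = false → ∀ z, c z = true → G.Adj v z → (z = x0 ∨ G.Adj x0 z))) := by
    intro v
    refine reach x0 v (hconn.preconnected x0 v).some ⟨fun _ => Or.inl rfl, fun hf => ?_⟩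
    rw [hx0] at hf; cases hf
  have shortsK : ∀ z, c z = true → z = x0 ∨ G.Adj x0 z := fun z hz => (allA z).1 hz
  -- the coordinate function
  set σ : V → Fin n := fun v => if h : G.Adj x0 v then (sl x0 hx0 v h).1 else ⟨0, by omega⟩
    with hσ
  have σx0 : σ x0 = ⟨0, by omega⟩ := dif_neg (G.loopless.irrefl x0)
  have σadj : ∀ v (h : G.Adj x0 v), σ v = (sl x0 hx0 v h).1 := fun v h => dif_pos h
  have σne0 : ∀ v (h : G.Adj x0 v), σ v ≠ ⟨0, by omega⟩ := by
    intro v h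
    rw [σadj v h]
    have := sl_nbr x0 hx0 v h
    rw [nbr11 pf] at this
    exact this.1
  have σdiag : ∀ v (h : G.Adj x0 v), c v = true → sl x0 hx0 v h = (σ v, σ v) := by
    intro v h hcv
    have hd : (sl x0 hx0 v h).1 = (sl x0 hx0 v h).2 :=
      (WBcolor_iff _).1 (by rw [sl_col]; exact hcv)
    rw [σadj v h]
    exact Prod.ext_iff.mpr ⟨rfl, hd.symm⟩
  have σinjS : ∀ u v, c u = true → c v = true → σ u = σ v → u = v := by
    intro u v hu hv he
    rcases shortsK u hu with rfl | hu'
    · rcases shortsK v hv with rfl | hv'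
      · rfl
      · exact absurd he.symm (by rw [σx0]; exact σne0 v hv')
    · rcases shortsK v hv with rfl | hv'
      · exact absurd he (by rw [σx0]; exact σne0 u hu')
      · refine sl_inj x0 hx0 u hu' v hv' ?_
        rw [σdiag u hu' hu, σdiag v hv' hv, he]
  have σsurjS : ∀ a : Fin n, a ≠ ⟨0, by omega⟩ → ∃ v, ∃ h : G.Adj x0 v, c v = true ∧ σ v = a := by
    intro a ha
    have hm : (WB n).Adj (shortWBvertex n pf) (a, a) := by rw [nbr11 pf]; exact ⟨ha, ha⟩
    obtain ⟨v, h, he⟩ := sl_surj x0 hx0 (a, a) hm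
    refine ⟨v, h, by rw [← sl_col x0 hx0 v h, he, WBcolor_iff], ?_⟩
    rw [σadj v h, he]
  -- all shorts are pairwise adjacent
  have Sall : ∀ z z', c z = true → c z' = true → z ≠ z' → G.Adj z z' := by
    intro z z' hz hz' hne
    rcases shortsK z hz with rfl | hzK
    · rcases shortsK z' hz' with rfl | hz'K
      · exact absurd rfl hne
      · exact hz'K
    · rcases shortsK z' hz' with rfl | hz'K
      · exact hzK.symm
      · exact Sclique x0 hx0 z z' hz hz' hzK hz'K hne
  -- σ is surjective onto Fin n from the shorts
  have σsurj : ∀ a : Fin n, ∃ v, c v = true ∧ σ v = a := by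
    intro a
    by_cases ha : a = ⟨0, by omega⟩
    · exact ⟨x0, hx0, by rw [σx0, ha]⟩
    · obtain ⟨v, h, hc, he⟩ := σsurjS a ha
      exact ⟨v, hc, he⟩
  -- diagonal labels
  have sl_diag : ∀ x hx u h, c u = true → sl x hx u h = ((sl x hx u h).1, (sl x hx u h).1) := by
    intro x hx u h hcu
    have hd : (sl x hx u h).1 = (sl x hx u h).2 :=
      (WBcolor_iff _).1 (by rw [sl_col]; exact hcu)
    exact Prod.ext_iff.mpr ⟨rfl, hd.symm⟩
  -- the fundamental "miss" computation in the link of a short vertex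
  have miss_label : ∀ s (hs : c s = true) v (hv : c v = false) (h : G.Adj s v)
      z (hz : c z = true) (hzs : G.Adj s z),
      (¬ G.Adj v z ↔ ((sl s hs z hzs).1 = (sl s hs v h).1 ∨ (sl s hs z hzs).1 = (sl s hs v h).2)) := by
    intro s hs v hv h z hz hzs
    have hd : (sl s hs v h).1 ≠ (sl s hs v h).2 := by
      rw [← WBcolor_iff']; rw [sl_col]; exact hv
    have hzdiag := sl_diag s hs z hzs hz
    have key : (WB n).Adj (sl s hs z hzs) (sl s hs v h) ↔
        ((sl s hs z hzs).1 ≠ (sl s hs v h).1 ∧ (sl s hs z hzs).1 ≠ (sl s hs v h).2) := by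
      rw [hzdiag, WB_adj]
      constructor
      · rintro ⟨hne, ⟨e1, e2, _, _⟩ | ⟨e1, e2⟩⟩
        · exact ⟨e1, e2⟩
        · exact absurd (e1.trans e2.symm) hd
      · rintro ⟨e1, e2⟩
        exact ⟨fun e => e1 (congrArg Prod.fst e), Or.inl ⟨e1, e2, e1, e2⟩⟩
      
    constructor
    · intro hna
      by_contra hcon
      push_neg at hcon
      exact hna (((sl_adj s hs z hzs v h).1 (key.2 hcon)).symm)
    · intro hor hadj
      have := key.1 ((sl_adj s hs z hzs v h).2 hadj.symm)
      rcases hor with e | e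
      · exact this.1 e
      · exact this.2 e
  -- every long vertex misses exactly two shorts
  have missPair : ∀ v, c v = false → ∃ d1 d2, c d1 = true ∧ c d2 = true ∧ d1 ≠ d2 ∧
      (∀ z, c z = true → (¬ G.Adj v z ↔ (z = d1 ∨ z = d2))) := by
    intro v hv
    obtain ⟨s, hs, hvs⟩ := LshortNbr v hv
    have hsv : G.Adj s v := hvs.symm
    have hq := sl_nbr s hs v hsv
    rw [nbr11 pf] at hq
    have hd : (sl s hs v hsv).1 ≠ (sl s hs v hsv).2 := by
      rw [← WBcolor_iff']; rw [sl_col]; exact hv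
    obtain ⟨d1, hd1, he1⟩ := sl_surj s hs ((sl s hs v hsv).1, (sl s hs v hsv).1)
      (by rw [nbr11 pf]; exact ⟨hq.1, hq.1⟩)
    obtain ⟨d2, hd2, he2⟩ := sl_surj s hs ((sl s hs v hsv).2, (sl s hs v hsv).2)
      (by rw [nbr11 pf]; exact ⟨hq.2, hq.2⟩)
    have hcd1 : c d1 = true := by rw [← sl_col s hs d1 hd1, he1, WBcolor_iff]
    have hcd2 : c d2 = true := by rw [← sl_col s hs d2 hd2, he2, WBcolor_iff]
    have hdne : d1 ≠ d2 := by
      intro e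
      subst e
      rw [proof_irrel hd1 hd2, he2] at he1
      exact hd (congrArg Prod.fst he1).symm
    refine ⟨d1, d2, hcd1, hcd2, hdne, ?_⟩
    intro z hz
    by_cases hzs : z = s
    · subst hzs
      constructor
      · intro hna; exact absurd hvs hna
      · rintro (e | e)
        · exact absurd (G.ne_of_adj hd1).symm (by rw [← e]; simp)
        · exact absurd (G.ne_of_adj hd2).symm (by rw [← e]; simp)
    · have hzadj : G.Adj s z := Sall s z hs hz (fun e => hzs e.symm)
      rw [miss_label s hs v hv hsv z hz hzadj]
      constructor
      · rintro (e | e)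
        · left
          refine sl_inj s hs z hzadj d1 hd1 ?_
          rw [he1, sl_diag s hs z hzadj hz, e]
        · right
          refine sl_inj s hs z hzadj d2 hd2 ?_
          rw [he2, sl_diag s hs z hzadj hz, e]
      · rintro (rfl | rfl)
        · left; rw [he1]
        · right; rw [he2]
  -- unique missed short other than x0 (for longs not adjacent to x0)
  have tUnique : ∀ v, c v = false → ¬ G.Adj x0 v →
      ∃! t, (c t = true ∧ ¬ G.Adj v t ∧ t ≠ x0) := by
    intro v hv hnadj
    obtain ⟨d1, d2, hc1, hc2, hne, hiff⟩ := missPair v hv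
    have hx0m : ¬ G.Adj v x0 := fun e => hnadj e.symm
    rcases (hiff x0 hx0).1 hx0m with e | e
    · refine ⟨d2, ⟨hc2, (hiff d2 hc2).2 (Or.inr rfl), fun q => hne (q.trans e).symm⟩, ?_⟩
      intro t ⟨ht, htm, htx⟩
      rcases (hiff t ht).1 htm with f | f
      · exact absurd (f.trans e.symm) htx
      · exact f
    · refine ⟨d1, ⟨hc1, (hiff d1 hc1).2 (Or.inl rfl), fun q => hne (q.trans e)⟩, ?_⟩
      intro t ⟨ht, htm, htx⟩
      rcases (hiff t ht).1 htm with f | f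
      · exact f
      · exact absurd (f.trans e.symm) htx
  -- every long vertex has a unique "partner" (apex of its link)
  have partnerEx : ∀ v, c v = false →
      ∃! w, (c w = false ∧ G.Adj v w ∧ ∀ s, c s = true → G.Adj v s → G.Adj w s) := by
    intro v hv
    have hm : (WB n).Adj (longWBvertex n pf) (⟨1, by omega⟩, ⟨0, by omega⟩) := by
      rw [nbr12 pf]; exact Or.inr ⟨rfl, rfl⟩
    obtain ⟨w, hw, hew⟩ := ll_surj v hv _ hm
    have hcw : c w = false := by
      rw [← ll_col v hv w hw, hew, WBcolor_iff']
      exact mkne 1 0 _ _ (by omega)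
    have hwall : ∀ s, c s = true → G.Adj v s → G.Adj w s := by
      intro s hcs hvs
      have hds := ll_nbr v hv s hvs
      rw [nbr12 pf] at hds
      have hdiag : (ll v hv s hvs).1 = (ll v hv s hvs).2 :=
        (WBcolor_iff _).1 (by rw [ll_col]; exact hcs)
      have hs01 : (ll v hv s hvs).1 ≠ ⟨0, by omega⟩ ∧ (ll v hv s hvs).1 ≠ ⟨1, by omega⟩ := by
        rcases hds with ⟨e1, e2, _, _⟩ | ⟨e1, e2⟩
        · exact ⟨e1, e2⟩
        · rw [hdiag, e2] at e1
          exact absurd e1 (mkne 0 1 _ _ (by omega))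
      have : (WB n).Adj (ll v hv w hw) (ll v hv s hvs) := by
        rw [hew, WB_adj]
        refine ⟨?_, Or.inl ⟨fun e => hs01.2 e.symm, ?_, fun e => hs01.1 e.symm, ?_⟩⟩
        · intro e
          exact hs01.2 (by rw [← (congrArg Prod.fst e)])
        · rw [← hdiag]; exact fun e => hs01.2 e.symm
        · rw [← hdiag]; exact fun e => hs01.1 e.symm
      exact ((ll_adj v hv w hw s hvs).1 this).symm.symm
    refine ⟨w, ⟨hcw, hw, hwall⟩, ?_⟩
    intro w' ⟨hcw', hw', hwall'⟩
    exact Apex_unique v hv w' w hcw' hcw hw' hw hwall' hwall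
  have pickFin : ∀ (s : Finset (Fin n)), s.card < n → ∃ a, a ∉ s := by
    intro s hs
    by_contra h
    push_neg at h
    have : s = Finset.univ := Finset.eq_univ_iff_forall.2 h
    rw [this, Finset.card_univ, Fintype.card_fin] at hs
    omega
  have pickShort2 : ∀ t1 t2 : V, ∃ z, c z = true ∧ z ≠ t1 ∧ z ≠ t2 := by
    intro t1 t2
    have hcard : ({σ t1, σ t2} : Finset (Fin n)).card < n := by
      have h2 : ({σ t1, σ t2} : Finset (Fin n)).card ≤ 2 :=
        (Finset.card_insert_le _ _).trans (by simp)
      omega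
    obtain ⟨a, ha⟩ := pickFin _ hcard
    obtain ⟨z, hz, hze⟩ := σsurj a
    refine ⟨z, hz, fun e => ha ?_, fun e => ha ?_⟩ <;> rw [← hze, e] <;> simp
  have pickShort4 : ∀ t1 t2 t3 t4 : V, c t1 = true → c t2 = true → c t3 = true → c t4 = true →
      t1 ≠ t2 → t1 ≠ t3 → t1 ≠ t4 → t2 ≠ t3 → t2 ≠ t4 → t3 ≠ t4 →
      ∃ z, c z = true ∧ z ≠ t1 ∧ z ≠ t2 ∧ z ≠ t3 ∧ z ≠ t4 := by
    intro t1 t2 t3 t4 h1 h2 h3 h4 e12 e13 e14 e23 e24 e34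
    have s12 : σ t1 ≠ σ t2 := fun e => e12 (σinjS _ _ h1 h2 e)
    have s13 : σ t1 ≠ σ t3 := fun e => e13 (σinjS _ _ h1 h3 e)
    have s14 : σ t1 ≠ σ t4 := fun e => e14 (σinjS _ _ h1 h4 e)
    have s23 : σ t2 ≠ σ t3 := fun e => e23 (σinjS _ _ h2 h3 e)
    have s24 : σ t2 ≠ σ t4 := fun e => e24 (σinjS _ _ h2 h4 e)
    have s34 : σ t3 ≠ σ t4 := fun e => e34 (σinjS _ _ h3 h4 e)
    have hcard : ({σ t1, σ t2, σ t3, σ t4} : Finset (Fin n)).card = 4 := by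
      rw [Finset.card_insert_of_notMem (by simp [s12, s13, s14]),
        Finset.card_insert_of_notMem (by simp [s23, s24]),
        Finset.card_insert_of_notMem (by simp [s34]), Finset.card_singleton]
    have hn4 : 4 ≤ n := by
      have := Finset.card_le_univ ({σ t1, σ t2, σ t3, σ t4} : Finset (Fin n))
      rw [hcard] at this
      simpa using this
    have hn5 : 5 ≤ n := by rcases hn with h | h <;> omega
    obtain ⟨a, ha⟩ := pickFin _ (by rw [hcard]; omega)
    obtain ⟨z, hz, hze⟩ := σsurj a
    refine ⟨z, hz, fun e => ha ?_, fun e => ha ?_, fun e => ha ?_, fun e => ha ?_⟩ <;>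
      rw [← hze, e] <;> simp
  -- C1 : adjacent longs have equal or disjoint missed sets
  have C1 : ∀ u v (hu : c u = false) (hv : c v = false), G.Adj u v →
      (∀ z, c z = true → (¬ G.Adj u z ↔ ¬ G.Adj v z)) ∨
      (∀ z, c z = true → ¬(¬ G.Adj u z ∧ ¬ G.Adj v z)) := by
    intro u v hu hv huv
    obtain ⟨s, hs, hsu, hsv⟩ := Lcommon u hu v hv huv
    have hsu' : G.Adj s u := hsu.symm
    have hsv' : G.Adj s v := hsv.symm
    have hwb := (sl_adj s hs u hsu' v hsv').2 huv
    rw [WB_adj] at hwb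
    rcases hwb with ⟨hne, ⟨e1, e2, e3, e4⟩ | ⟨e1, e2⟩⟩
    · right
      intro z hz ⟨hzu, hzv⟩
      by_cases hzs : z = s
      · subst hzs; exact hzu hsu
      · have hzadj : G.Adj s z := Sall s z hs hz (fun e => hzs e.symm)
        have m1 := (miss_label s hs u hu hsu' z hz hzadj).1 hzu
        have m2 := (miss_label s hs v hv hsv' z hz hzadj).1 hzv
        rcases m1 with f1 | f1 <;> rcases m2 with f2 | f2
        · exact e1 (f1.symm.trans f2)
        · exact e2 (f1.symm.trans f2)
        · exact e3 (f1.symm.trans f2)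
        · exact e4 (f1.symm.trans f2)
    · left
      intro z hz
      by_cases hzs : z = s
      · subst hzs
        constructor
        · intro hq; exact absurd hsu hq
        · intro hq; exact absurd hsv hq
      · have hzadj : G.Adj s z := Sall s z hs hz (fun e => hzs e.symm)
        rw [miss_label s hs u hu hsu' z hz hzadj, miss_label s hs v hv hsv' z hz hzadj,
          e1, e2]
        exact Or.comm
  -- C2 : longs with disjoint missed sets are adjacent
  have C2 : ∀ u v (hu : c u = false) (hv : c v = false) a1 a2 b1 b2,
      c a1 = true → c a2 = true → c b1 = true → c b2 = true → a1 ≠ a2 → b1 ≠ b2 →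
      a1 ≠ b1 → a1 ≠ b2 → a2 ≠ b1 → a2 ≠ b2 →
      (∀ z, c z = true → (¬ G.Adj u z ↔ (z = a1 ∨ z = a2))) →
      (∀ z, c z = true → (¬ G.Adj v z ↔ (z = b1 ∨ z = b2))) →
      G.Adj u v := by
    intro u v hu hv a1 a2 b1 b2 hca1 hca2 hcb1 hcb2 ha hb hab1 hab2 hab3 hab4 hmu hmv
    obtain ⟨s, hs, hs1, hs2, hs3, hs4⟩ :=
      pickShort4 a1 a2 b1 b2 hca1 hca2 hcb1 hcb2 ha hab1 hab2 hab3 hab4 hb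
    have hsu : G.Adj s u := by
      by_contra hq
      have : ¬ G.Adj u s := fun e => hq e.symm
      rcases (hmu s hs).1 this with e | e
      · exact hs1 e
      · exact hs2 e
    have hsv : G.Adj s v := by
      by_contra hq
      have : ¬ G.Adj v s := fun e => hq e.symm
      rcases (hmv s hs).1 this with e | e
      · exact hs3 e
      · exact hs4 e
    have hqu := sl_nbr s hs u hsu
    have hqv := sl_nbr s hs v hsv
    rw [nbr11 pf] at hqu hqv
    have comp : ∀ w : Fin n, w ≠ ⟨0, by omega⟩ →
        (w = (sl s hs u hsu).1 ∨ w = (sl s hs u hsu).2) →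
        (w = (sl s hs v hsv).1 ∨ w = (sl s hs v hsv).2) → False := by
      intro w hw0 hwu hwv
      obtain ⟨z, hzadj, hze⟩ := sl_surj s hs (w, w) (by rw [nbr11 pf]; exact ⟨hw0, hw0⟩)
      have hcz : c z = true := by rw [← sl_col s hs z hzadj, hze, WBcolor_iff]
      have hznu : ¬ G.Adj u z := by
        rw [miss_label s hs u hu hsu z hcz hzadj, hze]
        exact hwu
      have hznv : ¬ G.Adj v z := by
        rw [miss_label s hs v hv hsv z hcz hzadj, hze]
        exact hwv
      rcases (hmu z hcz).1 hznu with e | e <;> rcases (hmv z hcz).1 hznv with f | f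
      · exact hab1 (e.symm.trans f)
      · exact hab2 (e.symm.trans f)
      · exact hab3 (e.symm.trans f)
      · exact hab4 (e.symm.trans f)
    have d1 : (sl s hs u hsu).1 ≠ (sl s hs v hsv).1 :=
      fun e => comp _ hqu.1 (Or.inl rfl) (Or.inl e)
    have d2 : (sl s hs u hsu).1 ≠ (sl s hs v hsv).2 :=
      fun e => comp _ hqu.1 (Or.inl rfl) (Or.inr e)
    have d3 : (sl s hs u hsu).2 ≠ (sl s hs v hsv).1 :=
      fun e => comp _ hqu.2 (Or.inr rfl) (Or.inl e)
    have d4 : (sl s hs u hsu).2 ≠ (sl s hs v hsv).2 :=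
      fun e => comp _ hqu.2 (Or.inr rfl) (Or.inr e)
    refine (sl_adj s hs u hsu v hsv).1 ?_
    rw [WB_adj]
    exact ⟨fun e => d1 (congrArg Prod.fst e), Or.inl ⟨d1, d2, d3, d4⟩⟩
  -- C3 : distinct longs with equal missed sets are adjacent
  have C3 : ∀ u v (hu : c u = false) (hv : c v = false), u ≠ v →
      (∀ z, c z = true → (¬ G.Adj u z ↔ ¬ G.Adj v z)) → G.Adj u v := by
    intro u v hu hv hne hiff
    obtain ⟨a1, a2, hca1, hca2, ha, hmu⟩ := missPair u hu
    obtain ⟨s, hs, hs1, hs2⟩ := pickShort2 a1 a2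
    have hsu : G.Adj s u := by
      by_contra hq
      have : ¬ G.Adj u s := fun e => hq e.symm
      rcases (hmu s hs).1 this with e | e
      · exact hs1 e
      · exact hs2 e
    have hsv : G.Adj s v := by
      by_contra hq
      have h1 : ¬ G.Adj v s := fun e => hq e.symm
      have h2 : ¬ G.Adj u s := (hiff s hs).2 h1
      rcases (hmu s hs).1 h2 with e | e
      · exact hs1 e
      · exact hs2 e
    have hqu := sl_nbr s hs u hsu
    have hqv := sl_nbr s hs v hsv
    rw [nbr11 pf] at hqu hqv
    have hdu : (sl s hs u hsu).1 ≠ (sl s hs u hsu).2 := by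
      rw [← WBcolor_iff']; rw [sl_col]; exact hu
    have hdv : (sl s hs v hsv).1 ≠ (sl s hs v hsv).2 := by
      rw [← WBcolor_iff']; rw [sl_col]; exact hv
    have hqne : sl s hs u hsu ≠ sl s hs v hsv := fun e => hne (sl_inj s hs u hsu v hsv e)
    have transfer : ∀ w : Fin n, w ≠ ⟨0, by omega⟩ →
        (w = (sl s hs u hsu).1 ∨ w = (sl s hs u hsu).2) →
        (w = (sl s hs v hsv).1 ∨ w = (sl s hs v hsv).2) := by
      intro w hw0 hwu
      obtain ⟨z, hzadj, hze⟩ := sl_surj s hs (w, w) (by rw [nbr11 pf]; exact ⟨hw0, hw0⟩)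
      have hcz : c z = true := by rw [← sl_col s hs z hzadj, hze, WBcolor_iff]
      have hznu : ¬ G.Adj u z := by
        rw [miss_label s hs u hu hsu z hcz hzadj, hze]
        exact hwu
      have hznv : ¬ G.Adj v z := (hiff z hcz).1 hznu
      have := (miss_label s hs v hv hsv z hcz hzadj).1 hznv
      rw [hze] at this
      exact this
    have t1 := transfer _ hqu.1 (Or.inl rfl)
    have t2 := transfer _ hqu.2 (Or.inr rfl)
    have hswap : (sl s hs v hsv).1 = (sl s hs u hsu).2 ∧
        (sl s hs v hsv).2 = (sl s hs u hsu).1 := by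
      rcases t1 with e1 | e1
      · rcases t2 with e2 | e2
        · exact absurd (e1.trans e2.symm) hdu
        · exact absurd (Prod.ext_iff.mpr ⟨e1, e2⟩) hqne
      · rcases t2 with e2 | e2
        · exact ⟨e2.symm, e1.symm⟩
        · exact absurd (e1.trans e2.symm) hdu
    refine (sl_adj s hs u hsu v hsv).1 ?_
    rw [WB_adj]
    exact ⟨hqne, Or.inr ⟨hswap.1, hswap.2⟩⟩
  choose pr hpr using fun v hv => partnerEx v hv
  have pr_col : ∀ v hv, c (pr v hv) = false := fun v hv => (hpr v hv).1.1
  have pr_adj : ∀ v hv, G.Adj v (pr v hv) := fun v hv => (hpr v hv).1.2.1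
  have pr_all : ∀ v hv s, c s = true → G.Adj v s → G.Adj (pr v hv) s :=
    fun v hv => (hpr v hv).1.2.2
  have pr_uniq : ∀ v hv w, c w = false → G.Adj v w →
      (∀ s, c s = true → G.Adj v s → G.Adj w s) → w = pr v hv :=
    fun v hv w h1 h2 h3 => (hpr v hv).2 w ⟨h1, h2, h3⟩
  have pr_miss : ∀ v hv z, c z = true → (¬ G.Adj (pr v hv) z ↔ ¬ G.Adj v z) := by
    intro v hv z hz
    rcases C1 v (pr v hv) hv (pr_col v hv) (pr_adj v hv) with he | hd
    · exact (he z hz).symm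
    · exfalso
      obtain ⟨d1, d2, hc1, hc2, hne, hiff⟩ := missPair (pr v hv) (pr_col v hv)
      have h1 : ¬ G.Adj (pr v hv) d1 := (hiff d1 hc1).2 (Or.inl rfl)
      have h2 : G.Adj v d1 := by
        by_contra hq
        exact hd d1 hc1 ⟨hq, h1⟩
      exact h1 (pr_all v hv d1 hc1 h2)
  have meq_pr : ∀ u hu v, c v = false → u ≠ v →
      (∀ z, c z = true → (¬ G.Adj u z ↔ ¬ G.Adj v z)) → v = pr u hu := by
    intro u hu v hv hne hiff
    refine pr_uniq u hu v hv (C3 u v hu hv hne hiff) ?_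
    intro s hs hus
    by_contra hq
    exact ((hiff s hs).2 hq) hus
  have pr_ne : ∀ v hv, pr v hv ≠ v := fun v hv => (G.ne_of_adj (pr_adj v hv)).symm
  have pr_invol : ∀ v hv h2, pr (pr v hv) h2 = v := by
    intro v hv h2
    have h3 : ∀ s, c s = true → G.Adj (pr v hv) s → G.Adj v s := by
      intro s hs hps
      by_contra hq
      exact ((pr_miss v hv s hs).2 hq) hps
    have := pr_uniq (pr v hv) h2 v hv (pr_adj v hv).symm h3
    rw [proof_irrel h2 (pr_col v hv)]
    exact this.symm
  choose tf htf using fun v (hv : c v = false) (hna : ¬ G.Adj x0 v) => tUnique v hv hna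
  have tf_col : ∀ v hv hna, c (tf v hv hna) = true := fun v hv hna => (htf v hv hna).1.1
  have tf_miss : ∀ v hv hna, ¬ G.Adj v (tf v hv hna) := fun v hv hna => (htf v hv hna).1.2.1
  have tf_nex0 : ∀ v hv hna, tf v hv hna ≠ x0 := fun v hv hna => (htf v hv hna).1.2.2
  have tf_uniq : ∀ v hv hna t, c t = true → ¬ G.Adj v t → t ≠ x0 → t = tf v hv hna :=
    fun v hv hna t h1 h2 h3 => (htf v hv hna).2 t ⟨h1, h2, h3⟩
  have σtf_ne0 : ∀ v hv hna, σ (tf v hv hna) ≠ ⟨0, by omega⟩ := by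
    intro v hv hna
    rcases shortsK _ (tf_col v hv hna) with e | e
    · exact absurd e (tf_nex0 v hv hna)
    · exact σne0 _ e
  -- the missed pair of a long vertex not adjacent to x0 is {x0, tf v}
  have missx0 : ∀ v (hv : c v = false) (hna : ¬ G.Adj x0 v) z, c z = true →
      (¬ G.Adj v z ↔ (z = x0 ∨ z = tf v hv hna)) := by
    intro v hv hna z hz
    obtain ⟨d1, d2, hc1, hc2, hne, hiff⟩ := missPair v hv
    have hx0m : ¬ G.Adj v x0 := fun e => hna e.symm
    have htm : ¬ G.Adj v (tf v hv hna) := tf_miss v hv hna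
    have hx0d := (hiff x0 hx0).1 hx0m
    have htd := (hiff _ (tf_col v hv hna)).1 htm
    have hxt : x0 ≠ tf v hv hna := fun e => (tf_nex0 v hv hna) e.symm
    rw [hiff z hz]
    rcases hx0d with e1 | e1 <;> rcases htd with e2 | e2
    · exact absurd (e1.trans e2.symm) hxt
    · constructor
      · rintro (rfl | rfl)
        · left; exact e1.symm
        · right; exact e2.symm
      · rintro (rfl | rfl)
        · left; exact e1
        · right; exact e2
    · constructor
      · rintro (rfl | rfl)
        · right; exact e2.symm
        · left; exact e1.symm
      · rintro (rfl | rfl)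
        · right; exact e1
        · left; exact e2
    · exact absurd (e1.trans e2.symm) hxt
  -- diagonal adjacency computation in WB
  have wbDiag : ∀ (a : Fin n) (q : Fin n × Fin n), q.1 ≠ q.2 →
      ((WB n).Adj (a, a) q ↔ (a ≠ q.1 ∧ a ≠ q.2)) := by
    intro a q hd
    rw [WB_adj]
    constructor
    · rintro ⟨hne, ⟨e1, e2, _, _⟩ | ⟨e1, e2⟩⟩
      · exact ⟨e1, e2⟩
      · exact absurd (e1.trans e2.symm) hd
    · rintro ⟨e1, e2⟩
      exact ⟨fun e => e1 (congrArg Prod.fst e), Or.inl ⟨e1, e2, e1, e2⟩⟩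
  -- a linear order for orientation choices
  letI lo : LinearOrder V := @IsWellOrder.linearOrder V WellOrderingRel inferInstance
  -- the isomorphism as a function
  set F : V → Fin n × Fin n := fun v =>
    if hcv : c v = true then (σ v, σ v)
    else if h : G.Adj x0 v then sl x0 hx0 v h
    else
      (if lo.le v (pr v (Bool.eq_false_iff.mpr hcv)) then
        ((⟨0, by omega⟩ : Fin n), σ (tf v (Bool.eq_false_iff.mpr hcv) h))
      else (σ (tf v (Bool.eq_false_iff.mpr hcv) h), (⟨0, by omega⟩ : Fin n))) with hF
  have F_short : ∀ v (h : c v = true), F v = (σ v, σ v) := fun v h => dif_pos h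
  have F_l1 : ∀ v (hv : c v = false) (h : G.Adj x0 v), F v = sl x0 hx0 v h := by
    intro v hv h
    have h1 : ¬ c v = true := by rw [hv]; simp
    show (if hcv : c v = true then _ else _) = _
    rw [dif_neg h1, dif_pos h]
  have F_l2 : ∀ v (hv : c v = false) (h : ¬ G.Adj x0 v),
      F v = (if lo.le v (pr v hv) then ((⟨0, by omega⟩ : Fin n), σ (tf v hv h))
        else (σ (tf v hv h), (⟨0, by omega⟩ : Fin n))) := by
    intro v hv h
    have h1 : ¬ c v = true := by rw [hv]; simp
    show (if hcv : c v = true then _ else _) = _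
    rw [dif_neg h1, dif_neg h]
  have wbOff : ∀ (q : Fin n × Fin n) (b : Fin n), q.1 ≠ ⟨0, by omega⟩ → q.2 ≠ ⟨0, by omega⟩ →
      b ≠ ⟨0, by omega⟩ → ((WB n).Adj q ((⟨0, by omega⟩ : Fin n), b) ↔ (q.1 ≠ b ∧ q.2 ≠ b)) := by
    intro q b h1 h2 hb
    rw [WB_adj]
    constructor
    · rintro ⟨hne, ⟨e1, e2, e3, e4⟩ | ⟨e1, e2⟩⟩
      · exact ⟨e2, e4⟩
      · exact absurd e1.symm h2
    · rintro ⟨e1, e2⟩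
      exact ⟨fun e => h1 (congrArg Prod.fst e), Or.inl ⟨h1, e1, h2, e2⟩⟩
  have wbOff' : ∀ (q : Fin n × Fin n) (b : Fin n), q.1 ≠ ⟨0, by omega⟩ → q.2 ≠ ⟨0, by omega⟩ →
      b ≠ ⟨0, by omega⟩ → ((WB n).Adj q (b, (⟨0, by omega⟩ : Fin n)) ↔ (q.1 ≠ b ∧ q.2 ≠ b)) := by
    intro q b h1 h2 hb
    rw [WB_adj]
    constructor
    · rintro ⟨hne, ⟨e1, e2, e3, e4⟩ | ⟨e1, e2⟩⟩
      · exact ⟨e1, e3⟩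
      · exact absurd e2.symm h1
    · rintro ⟨e1, e2⟩
      exact ⟨fun e => e1 (congrArg Prod.fst e), Or.inl ⟨e1, h1, e2, h2⟩⟩
  -- short-short adjacency correspondence
  have mA : ∀ u v (hu : c u = true) (hv : c v = true), u ≠ v →
      (G.Adj u v ↔ (WB n).Adj (F u) (F v)) := by
    intro u v hu hv hne
    rw [F_short u hu, F_short v hv]
    constructor
    · intro h
      have hσ : σ u ≠ σ v := fun e => hne (σinjS u v hu hv e)
      rw [WB_adj]
      exact ⟨fun e => hσ (congrArg Prod.fst e), Or.inl ⟨hσ, hσ, hσ, hσ⟩⟩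
    · intro h
      exact Sall u v hu hv hne
  -- short-long adjacency correspondence
  have mB : ∀ s (hs : c s = true) v (hv : c v = false),
      (G.Adj s v ↔ (WB n).Adj (F s) (F v)) := by
    intro s hs v hv
    rw [F_short s hs]
    by_cases h : G.Adj x0 v
    · rw [F_l1 v hv h]
      by_cases hsx : s = x0
      · constructor
        · intro _
          rw [hsx, σx0]
          exact sl_nbr x0 hx0 v h
        · intro _
          rw [hsx]
          exact h
      · have hsx0 : G.Adj x0 s := by
          rcases shortsK s hs with e | e
          · exact absurd e hsx
          · exact e
        have hiff := sl_adj x0 hx0 s hsx0 v h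
        rw [← σdiag s hsx0 hs]
        exact hiff.symm
    · rw [F_l2 v hv h]
      have hts : σ (tf v hv h) ≠ ⟨0, by omega⟩ := σtf_ne0 v hv h
      have hGiff : G.Adj s v ↔ (s ≠ x0 ∧ s ≠ tf v hv h) := by
        constructor
        · intro hsv
          exact ⟨fun e => h (e ▸ hsv), fun e => (tf_miss v hv h) (e ▸ hsv).symm⟩
        · rintro ⟨h1, h2⟩
          by_contra hq
          have hq' : ¬ G.Adj v s := fun e => hq e.symm
          rcases (missx0 v hv h s hs).1 hq' with e | e
          · exact h1 e
          · exact h2 e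
      have hcomp : (s ≠ x0 ∧ s ≠ tf v hv h) ↔
          (σ s ≠ (⟨0, by omega⟩ : Fin n) ∧ σ s ≠ σ (tf v hv h)) := by
        constructor
        · rintro ⟨h1, h2⟩
          constructor
          · intro e
            exact h1 (σinjS s x0 hs hx0 (by rw [e, σx0]))
          · intro e
            exact h2 (σinjS s _ hs (tf_col v hv h) e)
        · rintro ⟨h1, h2⟩
          exact ⟨fun e => h1 (by rw [e, σx0]), fun e => h2 (by rw [e])⟩
      by_cases hle : lo.le v (pr v hv)
      · rw [if_pos hle, wbDiag _ _ (fun e => hts e.symm), hGiff, hcomp]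
      · rw [if_neg hle, wbDiag _ _ hts, hGiff, hcomp]
        constructor
        · rintro ⟨h1, h2⟩
          exact ⟨h2, h1⟩
        · rintro ⟨h1, h2⟩
          exact ⟨h2, h1⟩
  -- mixed long-long case helper
  have mixed : ∀ u v (hu : c u = false) (hv : c v = false), G.Adj x0 u → ¬ G.Adj x0 v →
      (G.Adj u v ↔ (WB n).Adj (F u) (F v)) := by
    intro u v hu hv hu0 hv0
    rw [F_l1 u hu hu0, F_l2 v hv hv0]
    have key : G.Adj u v ↔ G.Adj u (tf v hv hv0) := by
      constructor
      · intro hadj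
        rcases C1 u v hu hv hadj with he | hd
        · exfalso
          have hnx : ¬ G.Adj v x0 := fun e => hv0 e.symm
          exact ((he x0 hx0).2 hnx) hu0.symm
        · by_contra hq
          exact hd (tf v hv hv0) (tf_col v hv hv0) ⟨hq, tf_miss v hv hv0⟩
      · intro hadj
        obtain ⟨a1, a2, hca1, hca2, hne12, hmu⟩ := missPair u hu
        refine C2 u v hu hv a1 a2 x0 (tf v hv hv0) hca1 hca2 hx0 (tf_col v hv hv0) hne12
          (fun e => (tf_nex0 v hv hv0) e.symm) ?_ ?_ ?_ ?_ hmu (missx0 v hv hv0)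
        · intro e
          exact ((hmu a1 hca1).2 (Or.inl rfl)) (by rw [e]; exact hu0.symm)
        · intro e
          exact ((hmu a1 hca1).2 (Or.inl rfl)) (by rw [e]; exact hadj)
        · intro e
          exact ((hmu a2 hca2).2 (Or.inr rfl)) (by rw [e]; exact hu0.symm)
        · intro e
          exact ((hmu a2 hca2).2 (Or.inr rfl)) (by rw [e]; exact hadj)
    have hq := sl_nbr x0 hx0 u hu0
    rw [nbr11 pf] at hq
    have htx0 : G.Adj x0 (tf v hv hv0) := by
      rcases shortsK _ (tf_col v hv hv0) with e | e
      · exact absurd e (tf_nex0 v hv hv0)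
      · exact e
    have hml := miss_label x0 hx0 u hu hu0 (tf v hv hv0) (tf_col v hv hv0) htx0
    have goal2 : G.Adj u (tf v hv hv0) ↔
        ((sl x0 hx0 u hu0).1 ≠ σ (tf v hv hv0) ∧ (sl x0 hx0 u hu0).2 ≠ σ (tf v hv hv0)) := by
      have hσt : (sl x0 hx0 (tf v hv hv0) htx0).1 = σ (tf v hv hv0) := (σadj _ htx0).symm
      rw [hσt] at hml
      constructor
      · intro hadj
        constructor
        · intro e
          exact (hml.2 (Or.inl e.symm)) hadj
        · intro e
          exact (hml.2 (Or.inr e.symm)) hadj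
      · rintro ⟨h1, h2⟩
        by_contra hq'
        rcases hml.1 hq' with e | e
        · exact h1 e.symm
        · exact h2 e.symm
    have hts : σ (tf v hv hv0) ≠ ⟨0, by omega⟩ := σtf_ne0 v hv hv0
    by_cases hle : lo.le v (pr v hv)
    · rw [if_pos hle, key, goal2]
      exact (wbOff _ _ hq.1 hq.2 hts).symm
    · rw [if_neg hle, key, goal2]
      exact (wbOff' _ _ hq.1 hq.2 hts).symm
  -- long-long adjacency correspondence
  have mC : ∀ u v (hu : c u = false) (hv : c v = false), u ≠ v →
      (G.Adj u v ↔ (WB n).Adj (F u) (F v)) := by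
    intro u v hu hv hne
    by_cases hu0 : G.Adj x0 u
    · by_cases hv0 : G.Adj x0 v
      · rw [F_l1 u hu hu0, F_l1 v hv hv0]
        exact (sl_adj x0 hx0 u hu0 v hv0).symm
      · exact mixed u v hu hv hu0 hv0
    · by_cases hv0 : G.Adj x0 v
      · exact ⟨fun h => ((mixed v u hv hu hv0 hu0).1 h.symm).symm,
          fun h => ((mixed v u hv hu hv0 hu0).2 h.symm).symm⟩
      · have key : G.Adj u v ↔ tf u hu hu0 = tf v hv hv0 := by
          constructor
          · intro hadj
            rcases C1 u v hu hv hadj with he | hd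
            · have h2 : ¬ G.Adj u (tf v hv hv0) :=
                (he _ (tf_col v hv hv0)).2 (tf_miss v hv hv0)
              rcases (missx0 u hu hu0 _ (tf_col v hv hv0)).1 h2 with e | e
              · exact absurd e (tf_nex0 v hv hv0)
              · exact e.symm
            · exact (hd x0 hx0 ⟨fun e => hu0 e.symm, fun e => hv0 e.symm⟩).elim
          · intro he
            refine C3 u v hu hv hne ?_
            intro z hz
            rw [missx0 u hu hu0 z hz, missx0 v hv hv0 z hz, he]
        by_cases htuv : tf u hu hu0 = tf v hv hv0
        · have hGadj := key.2 htuv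
          have hmeq : ∀ z, c z = true → (¬ G.Adj u z ↔ ¬ G.Adj v z) := by
            intro z hz
            rw [missx0 u hu hu0 z hz, missx0 v hv hv0 z hz, htuv]
          have hveq : v = pr u hu := meq_pr u hu v hv hne hmeq
          subst hveq
          refine iff_of_true hGadj ?_
          rw [F_l2 u hu hu0, F_l2 _ hv hv0]
          have hpp : pr (pr u hu) hv = u := pr_invol u hu hv
          by_cases hle : lo.le u (pr u hu)
          · have hle2 : ¬ lo.le (pr u hu) (pr (pr u hu) hv) := by
              rw [hpp]
              intro hq
              exact hne (le_antisymm hle hq)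
            rw [if_pos hle, if_neg hle2, ← htuv]
            rw [WB_adj]
            refine ⟨?_, Or.inr ⟨rfl, rfl⟩⟩
            intro e
            exact (σtf_ne0 u hu hu0) (congrArg Prod.fst e).symm
          · have hle2 : lo.le (pr u hu) (pr (pr u hu) hv) := by
              rw [hpp]
              rcases le_total u (pr u hu) with hq | hq
              · exact absurd hq hle
              · exact hq
            rw [if_neg hle, if_pos hle2, ← htuv]
            rw [WB_adj]
            refine ⟨?_, Or.inr ⟨rfl, rfl⟩⟩
            intro e
            exact (σtf_ne0 u hu hu0) (congrArg Prod.fst e)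
        · refine iff_of_false (fun e => htuv (key.1 e)) ?_
          rw [F_l2 u hu hu0, F_l2 v hv hv0]
          have hσne : σ (tf u hu hu0) ≠ σ (tf v hv hv0) :=
            fun e => htuv (σinjS _ _ (tf_col u hu hu0) (tf_col v hv hv0) e)
          have h0u := σtf_ne0 u hu hu0
          have h0v := σtf_ne0 v hv hv0
          by_cases h1 : lo.le u (pr u hu) <;> by_cases h2 : lo.le v (pr v hv)
          · rw [if_pos h1, if_pos h2, WB_adj]
            rintro ⟨hne', ⟨e1, e2, e3, e4⟩ | ⟨e1, e2⟩⟩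
            · exact e1 rfl
            · exact h0u e1.symm
          · rw [if_pos h1, if_neg h2, WB_adj]
            rintro ⟨hne', ⟨e1, e2, e3, e4⟩ | ⟨e1, e2⟩⟩
            · exact e2 rfl
            · exact hσne e1.symm
          · rw [if_neg h1, if_pos h2, WB_adj]
            rintro ⟨hne', ⟨e1, e2, e3, e4⟩ | ⟨e1, e2⟩⟩
            · exact e3 rfl
            · exact hσne e2.symm
          · rw [if_neg h1, if_neg h2, WB_adj]
            rintro ⟨hne', ⟨e1, e2, e3, e4⟩ | ⟨e1, e2⟩⟩
            · exact e4 rfl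
            · exact h0v e1
  have F_offdiag : ∀ v (hv : c v = false), (F v).1 ≠ (F v).2 := by
    intro v hv
    by_cases h : G.Adj x0 v
    · rw [F_l1 v hv h]
      rw [← WBcolor_iff']
      rw [sl_col]
      exact hv
    · rw [F_l2 v hv h]
      by_cases hle : lo.le v (pr v hv)
      · rw [if_pos hle]
        exact fun e => (σtf_ne0 v hv h) e.symm
      · rw [if_neg hle]
        exact σtf_ne0 v hv h
  have tf_eq_pr : ∀ u hu hu0 v hv hv0, tf u hu hu0 = tf v hv hv0 → u ≠ v → v = pr u hu := by
    intro u hu hu0 v hv hv0 he hne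
    refine meq_pr u hu v hv hne ?_
    intro z hz
    rw [missx0 u hu hu0 z hz, missx0 v hv hv0 z hz, he]
  have Finj : Function.Injective F := by
    intro u v he
    by_cases hcu : c u = true <;> by_cases hcv : c v = true
    · rw [F_short u hcu, F_short v hcv] at he
      exact σinjS u v hcu hcv (congrArg Prod.fst he)
    · exfalso
      have hv : c v = false := Bool.eq_false_iff.mpr hcv
      rw [F_short u hcu] at he
      exact F_offdiag v hv (by rw [← he])
    · exfalso
      have hu : c u = false := Bool.eq_false_iff.mpr hcu
      rw [F_short v hcv] at he
      exact F_offdiag u hu (by rw [he])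
    · have hu : c u = false := Bool.eq_false_iff.mpr hcu
      have hv : c v = false := Bool.eq_false_iff.mpr hcv
      by_cases hu0 : G.Adj x0 u <;> by_cases hv0 : G.Adj x0 v
      · rw [F_l1 u hu hu0, F_l1 v hv hv0] at he
        exact sl_inj x0 hx0 u hu0 v hv0 he
      · exfalso
        rw [F_l1 u hu hu0, F_l2 v hv hv0] at he
        have hq := sl_nbr x0 hx0 u hu0
        rw [nbr11 pf] at hq
        by_cases h2 : lo.le v (pr v hv)
        · rw [if_pos h2] at he
          exact hq.1 (congrArg Prod.fst he)
        · rw [if_neg h2] at he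
          exact hq.2 (congrArg Prod.snd he)
      · exfalso
        rw [F_l2 u hu hu0, F_l1 v hv hv0] at he
        have hq := sl_nbr x0 hx0 v hv0
        rw [nbr11 pf] at hq
        by_cases h2 : lo.le u (pr u hu)
        · rw [if_pos h2] at he
          exact hq.1 (congrArg Prod.fst he).symm
        · rw [if_neg h2] at he
          exact hq.2 (congrArg Prod.snd he).symm
      · rw [F_l2 u hu hu0, F_l2 v hv hv0] at he
        by_contra hneq
        by_cases h1 : lo.le u (pr u hu) <;> by_cases h2 : lo.le v (pr v hv)
        · rw [if_pos h1, if_pos h2] at he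
          have hab : σ (tf u hu hu0) = σ (tf v hv hv0) := congrArg Prod.snd he
          have htuv : tf u hu hu0 = tf v hv hv0 :=
            σinjS _ _ (tf_col u hu hu0) (tf_col v hv hv0) hab
          have hveq := tf_eq_pr u hu hu0 v hv hv0 htuv hneq
          subst hveq
          rw [pr_invol u hu hv] at h2
          exact pr_ne u hu (le_antisymm h2 h1)
        · rw [if_pos h1, if_neg h2] at he
          exact σtf_ne0 v hv hv0 (congrArg Prod.fst he).symm
        · rw [if_neg h1, if_pos h2] at he
          exact σtf_ne0 u hu hu0 (congrArg Prod.fst he)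
        · rw [if_neg h1, if_neg h2] at he
          have hab : σ (tf u hu hu0) = σ (tf v hv hv0) := congrArg Prod.fst he
          have htuv : tf u hu hu0 = tf v hv hv0 :=
            σinjS _ _ (tf_col u hu hu0) (tf_col v hv hv0) hab
          have hveq := tf_eq_pr u hu hu0 v hv hv0 htuv hneq
          subst hveq
          rw [pr_invol u hu hv] at h2
          rcases le_total u (pr u hu) with hq | hq
          · exact h1 hq
          · exact h2 hq
  have build : ∀ b : Fin n, b ≠ ⟨0, by omega⟩ →
      ∃ u, ∃ hu : c u = false, ∃ hu0 : ¬ G.Adj x0 u, σ (tf u hu hu0) = b := by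
    intro b hb
    obtain ⟨t, htc, hts⟩ := σsurj b
    have htx0 : t ≠ x0 := fun e => hb (by rw [← hts, e, σx0])
    obtain ⟨s, hsc, hs1, hs2⟩ := pickShort2 x0 t
    have hsx0 : G.Adj s x0 := Sall s x0 hsc hx0 hs1
    have hst : G.Adj s t := Sall s t hsc htc hs2
    have hm1 := sl_nbr s hsc x0 hsx0
    rw [nbr11 pf] at hm1
    have hm2 := sl_nbr s hsc t hst
    rw [nbr11 pf] at hm2
    have ha12 : (sl s hsc x0 hsx0).1 ≠ (sl s hsc t hst).1 := by
      intro e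
      have e2 : sl s hsc x0 hsx0 = sl s hsc t hst := by
        rw [sl_diag s hsc x0 hsx0 hx0, sl_diag s hsc t hst htc, e]
      exact htx0 (sl_inj s hsc x0 hsx0 t hst e2).symm
    obtain ⟨u, huadj, hue⟩ := sl_surj s hsc ((sl s hsc x0 hsx0).1, (sl s hsc t hst).1)
      (by rw [nbr11 pf]; exact ⟨hm1.1, hm2.1⟩)
    have hcu : c u = false := by
      rw [← sl_col s hsc u huadj, hue, WBcolor_iff']
      exact ha12
    have hnux0 : ¬ G.Adj u x0 := by
      rw [miss_label s hsc u hcu huadj x0 hx0 hsx0, hue]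
      exact Or.inl rfl
    have hnut : ¬ G.Adj u t := by
      rw [miss_label s hsc u hcu huadj t htc hst, hue]
      exact Or.inr rfl
    have hu0 : ¬ G.Adj x0 u := fun e => hnux0 e.symm
    refine ⟨u, hcu, hu0, ?_⟩
    rw [← (tf_uniq u hcu hu0 t htc hnut htx0)]
    exact hts
  have Fsurj : Function.Surjective F := by
    intro p
    by_cases hd : p.1 = p.2
    · obtain ⟨s, hs, he⟩ := σsurj p.1
      refine ⟨s, ?_⟩
      rw [F_short s hs, he]
      exact Prod.ext_iff.mpr ⟨rfl, hd⟩
    · by_cases h1 : p.1 = ⟨0, by omega⟩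
      · have hb2 : p.2 ≠ ⟨0, by omega⟩ := fun e => hd (h1.trans e.symm)
        obtain ⟨u, hu, hu0, hσe⟩ := build p.2 hb2
        by_cases hle : lo.le u (pr u hu)
        · refine ⟨u, ?_⟩
          rw [F_l2 u hu hu0, if_pos hle, hσe]
          exact Prod.ext_iff.mpr ⟨h1.symm, rfl⟩
        · refine ⟨pr u hu, ?_⟩
          have hpc := pr_col u hu
          have hpu0 : ¬ G.Adj x0 (pr u hu) := by
            intro e
            exact ((pr_miss u hu x0 hx0).2 (fun e2 => hu0 e2.symm)) e.symm
          have htp : tf (pr u hu) hpc hpu0 = tf u hu hu0 :=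
            (tf_uniq (pr u hu) hpc hpu0 (tf u hu hu0) (tf_col u hu hu0)
              ((pr_miss u hu _ (tf_col u hu hu0)).2 (tf_miss u hu hu0))
              (tf_nex0 u hu hu0)).symm
          rw [F_l2 _ hpc hpu0]
          have hle2 : lo.le (pr u hu) (pr (pr u hu) hpc) := by
            rw [pr_invol u hu hpc]
            rcases le_total u (pr u hu) with hq | hq
            · exact absurd hq hle
            · exact hq
          rw [if_pos hle2, htp, hσe]
          exact Prod.ext_iff.mpr ⟨h1.symm, rfl⟩
      · by_cases h2 : p.2 = ⟨0, by omega⟩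
        · obtain ⟨u, hu, hu0, hσe⟩ := build p.1 h1
          by_cases hle : lo.le u (pr u hu)
          · refine ⟨pr u hu, ?_⟩
            have hpc := pr_col u hu
            have hpu0 : ¬ G.Adj x0 (pr u hu) := by
              intro e
              exact ((pr_miss u hu x0 hx0).2 (fun e2 => hu0 e2.symm)) e.symm
            have htp : tf (pr u hu) hpc hpu0 = tf u hu hu0 :=
              (tf_uniq (pr u hu) hpc hpu0 (tf u hu hu0) (tf_col u hu hu0)
                ((pr_miss u hu _ (tf_col u hu hu0)).2 (tf_miss u hu hu0))
                (tf_nex0 u hu hu0)).symm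
            rw [F_l2 _ hpc hpu0]
            have hle2 : ¬ lo.le (pr u hu) (pr (pr u hu) hpc) := by
              rw [pr_invol u hu hpc]
              intro hq
              exact pr_ne u hu (le_antisymm hq hle)
            rw [if_neg hle2, htp, hσe]
            exact Prod.ext_iff.mpr ⟨rfl, h2.symm⟩
          · refine ⟨u, ?_⟩
            rw [F_l2 u hu hu0, if_neg hle, hσe]
            exact Prod.ext_iff.mpr ⟨rfl, h2.symm⟩
        · obtain ⟨v, hadj, he⟩ := sl_surj x0 hx0 p (by rw [nbr11 pf]; exact ⟨h1, h2⟩)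
          have hcv : c v = false := by
            rw [← sl_col x0 hx0 v hadj, he, WBcolor_iff']
            exact hd
          exact ⟨v, by rw [F_l1 v hcv hadj, he]⟩
  have Fcol : ∀ v, WBcolor n (F v) = c v := by
    intro v
    by_cases hcv : c v = true
    · rw [F_short v hcv, hcv]
      exact (WBcolor_iff _).2 rfl
    · have hv : c v = false := Bool.eq_false_iff.mpr hcv
      rw [hv]
      exact (WBcolor_iff' _).2 (F_offdiag v hv)
  have Fiff : ∀ a b : V, (WB n).Adj (F a) (F b) ↔ G.Adj a b := by
    intro a b
    constructor
    · intro h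
      have hab : a ≠ b := fun e => (WB n).loopless.irrefl (F a) (by rw [e] at h ⊢; exact h)
      by_cases hca : c a = true <;> by_cases hcb : c b = true
      · exact (mA a b hca hcb hab).2 h
      · exact (mB a hca b (Bool.eq_false_iff.mpr hcb)).2 h
      · exact ((mB b hcb a (Bool.eq_false_iff.mpr hca)).2 h.symm).symm
      · exact (mC a b (Bool.eq_false_iff.mpr hca) (Bool.eq_false_iff.mpr hcb) hab).2 h
    · intro h
      have hab : a ≠ b := G.ne_of_adj h
      by_cases hca : c a = true <;> by_cases hcb : c b = true
      · exact (mA a b hca hcb hab).1 h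
      · exact (mB a hca b (Bool.eq_false_iff.mpr hcb)).1 h
      · exact ((mB b hcb a (Bool.eq_false_iff.mpr hca)).1 h.symm).symm
      · exact (mC a b (Bool.eq_false_iff.mpr hca) (Bool.eq_false_iff.mpr hcb) hab).1 h
  exact ⟨⟨Equiv.ofBijective F ⟨Finj, Fsurj⟩, fun {a b} => Fiff a b⟩, fun v => Fcol v⟩
end

section
/- Let Γ be a bichromatic graph that is locally like W(F4). Then every connected component of the induced subgraph of Γ on the short vertices is a clique on exactly 4 vertices, and every connected component of the induced subgraph of Γ on the long vertices is a clique on exactly 4 vertices. -/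
/-- The coloring of `W(Cₙ)`: obtained from `W(Bₙ)` by exchanging short and long vertices. -/
def WCcolor (n : ℕ) (p : Fin n × Fin n) : Bool := !(WBcolor n p)

/-- A bichromatic graph is locally like `W(F₄)` if the local graph at every short vertex
is isomorphic to `W(B₃)` and the local graph at every long vertex is isomorphic to `W(C₃)`. -/
def LocallyLikeWF4 {V : Type*} (G : SimpleGraph V) (c : V → Bool) : Prop :=
  ∀ v : V,
    (c v = true → BIso (G.induce (G.neighborSet v)) (fun x => c x.1) (WB 3) (WBcolor 3)) ∧
    (c v = false → BIso (G.induce (G.neighborSet v)) (fun x => c x.1) (WB 3) (WCcolor 3))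

lemma WB_diag_adj {i j : Fin 3} (h : i ≠ j) : (WB 3).Adj (i, i) (j, j) := by
  constructor
  · simp [Prod.ext_iff, h]
  · left
    ext x
    simp only [Set.mem_inter_iff, Set.mem_insert_iff, Set.mem_singleton_iff,
      Set.mem_empty_iff_false, or_self, iff_false, not_and]
    intro h1 h2; exact h (h1 ▸ h2 ▸ rfl)

lemma pigeon3 {α : Type*} {w1 w2 w3 v a b x : α}
    (hv : v = w1 ∨ v = w2 ∨ v = w3) (ha : a = w1 ∨ a = w2 ∨ a = w3)
    (hb : b = w1 ∨ b = w2 ∨ b = w3)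
    (hva : v ≠ a) (hvb : v ≠ b) (hab : a ≠ b)
    (hx : x = w1 ∨ x = w2 ∨ x = w3) : x = v ∨ x = a ∨ x = b := by
  rcases hv with rfl | rfl | rfl <;> rcases ha with rfl | rfl | rfl <;>
    rcases hb with rfl | rfl | rfl <;> simp_all <;> tauto

lemma keyAux {V : Type} {G : SimpleGraph V} {c : V → Bool} {b : Bool} {v : V}
    {col : Fin 3 × Fin 3 → Bool} (hcol : ∀ p : Fin 3 × Fin 3, col p = b ↔ p.1 = p.2)
    (e : G.induce (G.neighborSet v) ≃g WB 3) (he : ∀ x, col (e x) = c x.1) :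
    ∃ u1 u2 u3 : V,
      (G.Adj v u1 ∧ c u1 = b) ∧ (G.Adj v u2 ∧ c u2 = b) ∧ (G.Adj v u3 ∧ c u3 = b) ∧
      u1 ≠ u2 ∧ u1 ≠ u3 ∧ u2 ≠ u3 ∧
      G.Adj u1 u2 ∧ G.Adj u1 u3 ∧ G.Adj u2 u3 ∧
      ∀ w, G.Adj v w → c w = b → w = u1 ∨ w = u2 ∨ w = u3 := by
  set d : Fin 3 → ↥(G.neighborSet v) := fun i => e.symm (i, i) with hd
  have hadjv : ∀ i, G.Adj v (d i).1 := fun i => (d i).2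
  have hcolor : ∀ i, c (d i).1 = b := by
    intro i
    rw [← he (d i)]
    rw [hd]
    simp only [RelIso.apply_symm_apply]
    exact (hcol (i, i)).2 rfl
  have hdist : ∀ i j : Fin 3, i ≠ j → (d i).1 ≠ (d j).1 := by
    intro i j hij h
    apply hij
    have h2 : d i = d j := Subtype.ext h
    have := e.symm.injective h2
    simpa [Prod.ext_iff] using this
  have hadj : ∀ i j : Fin 3, i ≠ j → G.Adj (d i).1 (d j).1 := by
    intro i j hij
    have h1 : (WB 3).Adj (e (d i)) (e (d j)) := by
      rw [hd]; simp only [RelIso.apply_symm_apply]; exact WB_diag_adj hij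
    have h2 := e.map_rel_iff.mp h1
    exact h2
  refine ⟨(d 0).1, (d 1).1, (d 2).1,
    ⟨hadjv 0, hcolor 0⟩, ⟨hadjv 1, hcolor 1⟩, ⟨hadjv 2, hcolor 2⟩,
    hdist 0 1 (by decide), hdist 0 2 (by decide), hdist 1 2 (by decide),
    hadj 0 1 (by decide), hadj 0 2 (by decide), hadj 1 2 (by decide), ?_⟩
  intro w hw hcw
  set x : ↥(G.neighborSet v) := ⟨w, (G.mem_neighborSet v w).2 hw⟩ with hxdef
  have hdiag : (e x).1 = (e x).2 := (hcol (e x)).1 (by rw [he x]; exact hcw)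
  have hx : e x = ((e x).1, (e x).1) := Prod.ext rfl hdiag.symm
  have hx2 : x = d (e x).1 := by
    rw [hd]; simp only; rw [← hx, RelIso.symm_apply_apply]
  have hw2 : w = (d (e x).1).1 := congrArg Subtype.val hx2
  have h3 : ∀ i : Fin 3, i = 0 ∨ i = 1 ∨ i = 2 := by decide
  rcases h3 (e x).1 with h | h | h <;> rw [h] at hw2
  · exact Or.inl hw2
  · exact Or.inr (Or.inl hw2)
  · exact Or.inr (Or.inr hw2)

lemma key {V : Type} {G : SimpleGraph V} {c : V → Bool} (hloc : LocallyLikeWF4 G c) {b : Bool}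
    {v : V} (hv : c v = b) :
    ∃ u1 u2 u3 : V,
      (G.Adj v u1 ∧ c u1 = b) ∧ (G.Adj v u2 ∧ c u2 = b) ∧ (G.Adj v u3 ∧ c u3 = b) ∧
      u1 ≠ u2 ∧ u1 ≠ u3 ∧ u2 ≠ u3 ∧
      G.Adj u1 u2 ∧ G.Adj u1 u3 ∧ G.Adj u2 u3 ∧
      ∀ w, G.Adj v w → c w = b → w = u1 ∨ w = u2 ∨ w = u3 := by
  cases b with
  | true =>
    obtain ⟨e, he⟩ := (hloc v).1 hv
    exact keyAux (col := WBcolor 3) (fun p => by simp [WBcolor]) e he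
  | false =>
    obtain ⟨e, he⟩ := (hloc v).2 hv
    exact keyAux (col := WCcolor 3) (fun p => by simp [WCcolor, WBcolor]) e he

theorem monochromatic_components_are_4_cliques {V : Type} (G : SimpleGraph V) (c : V → Bool)
    (hloc : LocallyLikeWF4 G c) (b : Bool) (v : ↥{x : V | c x = b}) :
    (G.induce {x : V | c x = b}).IsClique {w : ↥{x : V | c x = b} | (G.induce {x : V | c x = b}).Reachable v w} ∧
    {w : ↥{x : V | c x = b} | (G.induce {x : V | c x = b}).Reachable v w}.ncard = 4 := by
  obtain ⟨u1, u2, u3, ⟨a1, c1⟩, ⟨a2, c2⟩, ⟨a3, c3⟩, d12, d13, d23, e12, e13, e23, hcompl⟩ :=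
    key hloc (v.2 : c v.1 = b)
  set w1 : ↥{x : V | c x = b} := ⟨u1, c1⟩
  set w2 : ↥{x : V | c x = b} := ⟨u2, c2⟩
  set w3 : ↥{x : V | c x = b} := ⟨u3, c3⟩
  set C : Set ↥{x : V | c x = b} := {v, w1, w2, w3} with hC
  -- closure under adjacency in H
  have closure : ∀ a ∈ C, ∀ w : ↥{x : V | c x = b}, (G.induce {x : V | c x = b}).Adj a w → w ∈ C := by
    intro a ha w haw
    have hadj : G.Adj a.1 w.1 := haw
    rcases ha with rfl | rfl | rfl | rfl
    · rcases hcompl w.1 hadj w.2 with h | h | h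
      · exact Or.inr (Or.inl (Subtype.ext h))
      · exact Or.inr (Or.inr (Or.inl (Subtype.ext h)))
      · exact Or.inr (Or.inr (Or.inr (Subtype.ext h)))
    all_goals {
      first
      | (obtain ⟨x1, x2, x3, ⟨b1, _⟩, ⟨b2, _⟩, ⟨b3, _⟩, _, _, _, _, _, _, hc⟩ :=
          key hloc (c1 : c u1 = b)
         have hmem := pigeon3 (hc v.1 a1.symm v.2) (hc u2 e12 c2) (hc u3 e13 c3)
           (fun h => a2.ne h) (fun h => a3.ne h) d23 (hc w.1 hadj w.2)
         rcases hmem with h | h | h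
         · exact Or.inl (Subtype.ext h)
         · exact Or.inr (Or.inr (Or.inl (Subtype.ext h)))
         · exact Or.inr (Or.inr (Or.inr (Subtype.ext h))))
      | (obtain ⟨x1, x2, x3, ⟨b1, _⟩, ⟨b2, _⟩, ⟨b3, _⟩, _, _, _, _, _, _, hc⟩ :=
          key hloc (c2 : c u2 = b)
         have hmem := pigeon3 (hc v.1 a2.symm v.2) (hc u1 e12.symm c1) (hc u3 e23 c3)
           (fun h => a1.ne h) (fun h => a3.ne h) d13 (hc w.1 hadj w.2)
         rcases hmem with h | h | h
         · exact Or.inl (Subtype.ext h)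
         · exact Or.inr (Or.inl (Subtype.ext h))
         · exact Or.inr (Or.inr (Or.inr (Subtype.ext h))))
      | (obtain ⟨x1, x2, x3, ⟨b1, _⟩, ⟨b2, _⟩, ⟨b3, _⟩, _, _, _, _, _, _, hc⟩ :=
          key hloc (c3 : c u3 = b)
         have hmem := pigeon3 (hc v.1 a3.symm v.2) (hc u1 e13.symm c1) (hc u2 e23.symm c2)
           (fun h => a1.ne h) (fun h => a2.ne h) d12 (hc w.1 hadj w.2)
         rcases hmem with h | h | h
         · exact Or.inl (Subtype.ext h)
         · exact Or.inr (Or.inl (Subtype.ext h))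
         · exact Or.inr (Or.inr (Or.inl (Subtype.ext h)))) }
  have walkClosed : ∀ {a bb : ↥{x : V | c x = b}}, (G.induce {x : V | c x = b}).Walk a bb → a ∈ C → bb ∈ C := by
    intro a bb p
    induction p with
    | nil => exact id
    | cons h p ih => intro ha; exact ih (closure _ ha _ h)
  have hsub : {w : ↥{x : V | c x = b} | (G.induce {x : V | c x = b}).Reachable v w} ⊆ C := by
    intro w hw
    obtain ⟨p⟩ := hw
    exact walkClosed p (Or.inl rfl)
  have hsup : C ⊆ {w : ↥{x : V | c x = b} | (G.induce {x : V | c x = b}).Reachable v w} := by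
    intro w hw
    rcases hw with rfl | rfl | rfl | rfl
    · exact SimpleGraph.Reachable.refl _
    · exact SimpleGraph.Adj.reachable (by exact a1)
    · exact SimpleGraph.Adj.reachable (by exact a2)
    · exact SimpleGraph.Adj.reachable (by exact a3)
  have hset : {w : ↥{x : V | c x = b} | (G.induce {x : V | c x = b}).Reachable v w} = C := Set.Subset.antisymm hsub hsup
  rw [hset]
  constructor
  · intro x hx y hy hxy
    have hne : x.1 ≠ y.1 := fun h => hxy (Subtype.ext h)
    show G.Adj x.1 y.1
    rcases hx with rfl | rfl | rfl | rfl <;> rcases hy with rfl | rfl | rfl | rfl <;>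
      first
      | exact absurd rfl hne
      | exact a1 | exact a1.symm | exact a2 | exact a2.symm | exact a3 | exact a3.symm
      | exact e12 | exact e12.symm | exact e13 | exact e13.symm | exact e23 | exact e23.symm
  · have hv1 : v ≠ w1 := fun h => a1.ne (congrArg Subtype.val h)
    have hv2 : v ≠ w2 := fun h => a2.ne (congrArg Subtype.val h)
    have hv3 : v ≠ w3 := fun h => a3.ne (congrArg Subtype.val h)
    have h12 : w1 ≠ w2 := fun h => d12 (congrArg Subtype.val h)
    have h13 : w1 ≠ w3 := fun h => d13 (congrArg Subtype.val h)
    have h23 : w2 ≠ w3 := fun h => d23 (congrArg Subtype.val h)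
    rw [hC]
    rw [Set.ncard_insert_of_notMem (by simp [hv1, hv2, hv3]),
      Set.ncard_insert_of_notMem (by simp [h12, h13]),
      Set.ncard_pair h23]
end

section
/- Let Γ be a bichromatic graph that is locally like W(F4), and let x_1, x_2, x_3, x_4 be four pairwise adjacent short vertices of Γ. Then for every pair of distinct indices i, j, the set of long vertices adjacent to both x_i and x_j has exactly two elements, and these two long vertices are adjacent to each other; moreover, for any three distinct indices i, j, k, no long vertex is adjacent to all of x_i, x_j and x_k. -/
lemma WB_adj_iff (n : ℕ) (p q : Fin n × Fin n) :
    (WB n).Adj p q ↔ p ≠ q ∧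
      ((p.1 ≠ q.1 ∧ p.1 ≠ q.2 ∧ p.2 ≠ q.1 ∧ p.2 ≠ q.2) ∨ (q.1 = p.2 ∧ q.2 = p.1)) := by
  unfold WB
  simp only [SimpleGraph.Adj]
  constructor
  · rintro ⟨hne, h | h⟩
    · refine ⟨hne, Or.inl ?_⟩
      rw [Set.eq_empty_iff_forall_notMem] at h
      refine ⟨?_, ?_, ?_, ?_⟩ <;> intro he
      · exact h p.1 ⟨by simp, by simp [he]⟩
      · exact h p.1 ⟨by simp, by simp [he]⟩
      · exact h p.2 ⟨by simp, by simp [he]⟩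
      · exact h p.2 ⟨by simp, by simp [he]⟩
    · exact ⟨hne, Or.inr h⟩
  · rintro ⟨hne, ⟨h1, h2, h3, h4⟩ | h⟩
    · refine ⟨hne, Or.inl ?_⟩
      rw [Set.eq_empty_iff_forall_notMem]
      rintro a ⟨ha, hb⟩
      simp only [Set.mem_insert_iff, Set.mem_singleton_iff] at ha hb
      rcases ha with rfl | rfl <;> rcases hb with h | h <;> simp_all
    · exact ⟨hne, Or.inr h⟩

instance (n : ℕ) : DecidableRel (WB n).Adj := fun p q =>
  decidable_of_iff' _ (WB_adj_iff n p q)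

lemma B3_pair (s : Fin 3 × Fin 3) (hs : s.1 = s.2) :
    ∃ u w : Fin 3 × Fin 3, u ≠ w ∧ (WB 3).Adj u w ∧
      ∀ p : Fin 3 × Fin 3, (¬ p.1 = p.2 ∧ (WB 3).Adj s p) ↔ (p = u ∨ p = w) := by
  obtain ⟨a, b⟩ := s
  simp only at hs
  subst hs
  fin_cases a
  · exact ⟨(1, 2), (2, 1), by decide, by decide, by decide⟩
  · exact ⟨(0, 2), (2, 0), by decide, by decide, by decide⟩
  · exact ⟨(0, 1), (1, 0), by decide, by decide, by decide⟩

lemma B3_no_triple (s t : Fin 3 × Fin 3) (hs : s.1 = s.2) (ht : t.1 = t.2) (hst : s ≠ t) :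
    ¬ ∃ p : Fin 3 × Fin 3, ¬ p.1 = p.2 ∧ (WB 3).Adj s p ∧ (WB 3).Adj t p := by
  obtain ⟨a, a'⟩ := s
  obtain ⟨b, b'⟩ := t
  simp only at hs ht
  subst hs; subst ht
  fin_cases a <;> fin_cases b <;> revert hst <;> decide

theorem common_long_neighbors_of_short_clique {V : Type} (G : SimpleGraph V) (c : V → Bool)
    (hloc : LocallyLikeWF4 G c) (x : Fin 4 → V)
    (hshort : ∀ i, c (x i) = true)
    (hadj : ∀ i j, i ≠ j → G.Adj (x i) (x j)) :
    (∀ i j, i ≠ j →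
      {y : V | c y = false ∧ G.Adj (x i) y ∧ G.Adj (x j) y}.ncard = 2 ∧
      (∀ y y', y ∈ {y : V | c y = false ∧ G.Adj (x i) y ∧ G.Adj (x j) y} →
        y' ∈ {y : V | c y = false ∧ G.Adj (x i) y ∧ G.Adj (x j) y} → y ≠ y' → G.Adj y y')) ∧
    (∀ i j k, i ≠ j → i ≠ k → j ≠ k →
      ¬ ∃ y : V, c y = false ∧ G.Adj (x i) y ∧ G.Adj (x j) y ∧ G.Adj (x k) y) := by
  constructor
  · intro i j hij
    obtain ⟨e, he⟩ := (hloc (x i)).1 (hshort i)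
    have hw : G.Adj (x i) (x j) := hadj i j hij
    set w' : G.neighborSet (x i) := ⟨x j, hw⟩ with hw'def
    have hs : (e w').1 = (e w').2 := by
      have h1 : WBcolor 3 (e w') = true := (he w').trans (hshort j)
      simpa [WBcolor] using h1
    obtain ⟨u₁, u₂, hu12, hadjU, hiffU⟩ := B3_pair (e w') hs
    set f : Fin 3 × Fin 3 → V := fun p => ((e.symm p : G.neighborSet (x i)) : V) with hfdef
    have hinj : Function.Injective f := by
      intro p q hpq
      exact e.symm.injective (Subtype.val_injective hpq)
    set T : Set (Fin 3 × Fin 3) := {p | ¬ p.1 = p.2 ∧ (WB 3).Adj (e w') p} with hTdef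
    have key : {y : V | c y = false ∧ G.Adj (x i) y ∧ G.Adj (x j) y} = f '' T := by
      ext y
      constructor
      · rintro ⟨hy1, hy2, hy3⟩
        refine ⟨e ⟨y, hy2⟩, ⟨?_, ?_⟩, ?_⟩
        · have hcol : WBcolor 3 (e ⟨y, hy2⟩) = false := (he ⟨y, hy2⟩).trans hy1
          simpa [WBcolor] using hcol
        · exact e.map_adj_iff.mpr hy3
        · simp [hfdef, e.symm_apply_apply]
      · rintro ⟨p, ⟨hp1, hp2⟩, rfl⟩
        refine ⟨?_, (e.symm p).2, ?_⟩
        · have hc := he (e.symm p)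
          rw [e.apply_symm_apply] at hc
          simp only at hc
          show c ((e.symm p : G.neighborSet (x i)) : V) = false
          rw [← hc]
          simp [WBcolor, hp1]
        · have h3 : (G.induce (G.neighborSet (x i))).Adj w' (e.symm p) := by
            have h4 := e.symm.map_adj_iff.mpr hp2
            rwa [e.symm_apply_apply] at h4
          exact h3
    have hTeq : T = {u₁, u₂} := by
      ext p
      have := hiffU p
      simp only [hTdef, Set.mem_setOf_eq, Set.mem_insert_iff, Set.mem_singleton_iff]
      exact this
    constructor
    · rw [key, Set.ncard_image_of_injective T hinj, hTeq, Set.ncard_pair hu12]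
    · intro y y' hy hy' hne
      rw [key] at hy hy'
      obtain ⟨p, hpT, rfl⟩ := hy
      obtain ⟨p', hp'T, rfl⟩ := hy'
      have hpp' : p ≠ p' := fun h => hne (by rw [h])
      have hadjpp : (WB 3).Adj p p' := by
        rw [hTeq] at hpT hp'T
        rcases hpT with rfl | rfl <;> rcases hp'T with rfl | rfl <;>
          first
            | exact absurd rfl hpp'
            | exact hadjU
            | exact hadjU.symm
      have h5 : (G.induce (G.neighborSet (x i))).Adj (e.symm p) (e.symm p') :=
        e.symm.map_adj_iff.mpr hadjpp
      exact h5
  · rintro i j k hij hik hjk ⟨y, hy0, hyi, hyj, hyk⟩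
    obtain ⟨e, he⟩ := (hloc (x i)).1 (hshort i)
    set w' : G.neighborSet (x i) := ⟨x j, hadj i j hij⟩ with hw'def
    set u' : G.neighborSet (x i) := ⟨x k, hadj i k hik⟩ with hu'def
    set z : G.neighborSet (x i) := ⟨y, hyi⟩ with hzdef
    have hs : (e w').1 = (e w').2 := by
      have h1 : WBcolor 3 (e w') = true := (he w').trans (hshort j)
      simpa [WBcolor] using h1
    have ht : (e u').1 = (e u').2 := by
      have h1 : WBcolor 3 (e u') = true := (he u').trans (hshort k)
      simpa [WBcolor] using h1
    have hst : e w' ≠ e u' := by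
      intro h
      have : w' = u' := e.injective h
      have : x j = x k := congrArg Subtype.val this
      exact (hadj j k hjk).ne this
    refine B3_no_triple (e w') (e u') hs ht hst ⟨e z, ?_, ?_, ?_⟩
    · have hcol : WBcolor 3 (e z) = false := (he z).trans hy0
      simpa [WBcolor] using hcol
    · exact e.map_adj_iff.mpr hyj
    · exact e.map_adj_iff.mpr hyk
end

section
/- Let Γ be a bichromatic graph that is locally like W(F4), and let Π be the partition of the vertices of Γ into the connected components of the monochromatic induced subgraphs (each such component is a monochromatic 4-clique). For blocks X, Y ∈ Π say X and Y are adjacent if some vertex of X is adjacent in Γ to some vertex of Y, and strongly connected if every vertex of X has a neighbor in Y and every vertex of Y has a neighbor in X. Then any two adjacent blocks have different types (so the contraction Γ/Π is bipartite), and for every block X the number of blocks adjacent to X plus the number of blocks strongly connected to X equals 6. -/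
/-- The block (monochromatic connected component) of a vertex `v`. -/
def blockOf {V : Type} (G : SimpleGraph V) (c : V → Bool) (v : V) : Set V :=
  {w : V | ∃ h : c w = c v, (G.induce {x : V | c x = c v}).Reachable ⟨w, h⟩ ⟨v, rfl⟩}

/-- The partition of the vertices into monochromatic connected components. -/
def blockPartition {V : Type} (G : SimpleGraph V) (c : V → Bool) : Set (Set V) :=
  Set.range (blockOf G c)

/-- Two blocks are adjacent if some vertex of one is adjacent to some vertex of the other. -/
def blockAdj {V : Type} (G : SimpleGraph V) (B B' : Set V) : Prop :=
  B ≠ B' ∧ ∃ a ∈ B, ∃ b ∈ B', G.Adj a b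

/-- Two blocks are strongly connected if every vertex of each has a neighbor in the other. -/
def stronglyConn {V : Type} (G : SimpleGraph V) (B B' : Set V) : Prop :=
  B ≠ B' ∧ (∀ a ∈ B, ∃ b ∈ B', G.Adj a b) ∧ (∀ b ∈ B', ∃ a ∈ B, G.Adj a b)


namespace Aux

def A3 (p q : Fin 3 × Fin 3) : Prop :=
  p ≠ q ∧ ((p.1 ≠ q.1 ∧ p.1 ≠ q.2 ∧ p.2 ≠ q.1 ∧ p.2 ≠ q.2) ∨ (q.1 = p.2 ∧ q.2 = p.1))

instance (p q : Fin 3 × Fin 3) : Decidable (A3 p q) := by unfold A3; infer_instance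

lemma inter_empty_iff (a b x y : Fin 3) :
    ({a, b} : Set (Fin 3)) ∩ {x, y} = ∅ ↔ (a ≠ x ∧ a ≠ y ∧ b ≠ x ∧ b ≠ y) := by
  simp only [Set.eq_empty_iff_forall_notMem, Set.mem_inter_iff, Set.mem_insert_iff,
    Set.mem_singleton_iff]
  constructor
  · intro h
    refine ⟨?_, ?_, ?_, ?_⟩ <;> intro e <;> [exact h a ⟨Or.inl rfl, Or.inl e⟩;
      exact h a ⟨Or.inl rfl, Or.inr e⟩; exact h b ⟨Or.inr rfl, Or.inl e⟩;
      exact h b ⟨Or.inr rfl, Or.inr e⟩]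
  · rintro ⟨h1, h2, h3, h4⟩ z ⟨hz1 | hz1, hz2 | hz2⟩ <;> subst hz1 <;> subst hz2 <;>
      [exact h1 rfl; exact h2 rfl; exact h3 rfl; exact h4 rfl]

lemma wb3_adj_iff (p q : Fin 3 × Fin 3) : (WB 3).Adj p q ↔ A3 p q := by
  show (p ≠ q ∧ (({p.1, p.2} : Set (Fin 3)) ∩ {q.1, q.2} = ∅ ∨ (q.1 = p.2 ∧ q.2 = p.1))) ↔ _
  rw [A3, inter_empty_iff]

lemma dec_diag_adj : ∀ p q : Fin 3 × Fin 3, p.1 = p.2 → q.1 = q.2 → p ≠ q → A3 p q := by decide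
lemma dec_diag_class : ∀ p : Fin 3 × Fin 3, p.1 = p.2 →
    p = ((0 : Fin 3), (0 : Fin 3)) ∨ p = (1, 1) ∨ p = (2, 2) := by decide
lemma dec_common : ∀ p q r : Fin 3 × Fin 3, p.1 = p.2 → q.1 ≠ q.2 → r.1 ≠ r.2 →
    A3 p q → A3 p r → (r = q ∨ A3 q r) := by decide
lemma dec_distinct : ∀ p p' q r : Fin 3 × Fin 3, p.1 = p.2 → p'.1 = p'.2 → p ≠ p' →
    q.1 ≠ q.2 → r.1 ≠ r.2 → A3 p q → A3 p' r → ¬(r = q ∨ A3 q r) := by decide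
lemma dec_attach : ∀ q : Fin 3 × Fin 3, q.1 ≠ q.2 → ∃ p : Fin 3 × Fin 3, p.1 = p.2 ∧ A3 p q := by
  decide
lemma dec_attach_unique : ∀ p p' q : Fin 3 × Fin 3, p.1 = p.2 → p'.1 = p'.2 → p ≠ p' →
    q.1 ≠ q.2 → A3 p q → A3 p' q → False := by decide
lemma dec_pair : ∀ p : Fin 3 × Fin 3, p.1 = p.2 → ∃ q r : Fin 3 × Fin 3,
    q.1 ≠ q.2 ∧ r.1 ≠ r.2 ∧ q ≠ r ∧ A3 q r ∧ A3 p q ∧ A3 p r := by decide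

end Aux

namespace Aux

variable {V : Type} (G : SimpleGraph V) (c : V → Bool)

def sameNbrs (v : V) : Set V := {w | G.Adj v w ∧ c w = c v}
def offNbrs (v : V) : Set V := {w | G.Adj v w ∧ c w ≠ c v}

variable {G c}

lemma exists_coords (hloc : LocallyLikeWF4 G c) (v : V) :
    ∃ e : (G.induce (G.neighborSet v)) ≃g WB 3,
      ∀ x : G.neighborSet v, (c x.1 = c v ↔ (e x).1 = (e x).2) := by
  rcases Bool.eq_false_or_eq_true (c v) with hv | hv
  · obtain ⟨e, he⟩ := (hloc v).1 hv
    refine ⟨e, fun x => ?_⟩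
    have h2 : WBcolor 3 (e x) = c x.1 := he x
    rw [hv, ← h2]
    simp [WBcolor]
  · obtain ⟨e, he⟩ := (hloc v).2 hv
    refine ⟨e, fun x => ?_⟩
    have h2 : WCcolor 3 (e x) = c x.1 := he x
    rw [hv, ← h2]
    simp [WCcolor, WBcolor]

lemma sameNbrs_adj (hloc : LocallyLikeWF4 G c) (v : V) :
    ∀ x ∈ sameNbrs G c v, ∀ y ∈ sameNbrs G c v, x ≠ y → G.Adj x y := by
  intro x hx y hy hxy
  obtain ⟨e, hcol⟩ := exists_coords hloc v
  set X : G.neighborSet v := ⟨x, hx.1⟩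
  set Y : G.neighborSet v := ⟨y, hy.1⟩
  have hpd : (e X).1 = (e X).2 := (hcol X).1 hx.2
  have hqd : (e Y).1 = (e Y).2 := (hcol Y).1 hy.2
  have hne : e X ≠ e Y := fun h => hxy (congrArg Subtype.val (e.toEquiv.injective h))
  exact e.map_adj_iff.1 ((wb3_adj_iff _ _).2 (dec_diag_adj _ _ hpd hqd hne))

lemma exists_three (hloc : LocallyLikeWF4 G c) (v : V) :
    ∃ a b d : V, a ≠ b ∧ a ≠ d ∧ b ≠ d ∧ sameNbrs G c v = {a, b, d} := by
  obtain ⟨e, hcol⟩ := exists_coords hloc v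
  refine ⟨(e.symm (0, 0)).1, (e.symm (1, 1)).1, (e.symm (2, 2)).1, ?_, ?_, ?_, ?_⟩
  · intro h
    have := e.symm.toEquiv.injective (Subtype.coe_injective h)
    exact absurd this (by decide)
  · intro h
    have := e.symm.toEquiv.injective (Subtype.coe_injective h)
    exact absurd this (by decide)
  · intro h
    have := e.symm.toEquiv.injective (Subtype.coe_injective h)
    exact absurd this (by decide)
  · ext w
    simp only [Set.mem_insert_iff, Set.mem_singleton_iff]
    constructor
    · rintro ⟨hw1, hw2⟩
      set W : G.neighborSet v := ⟨w, hw1⟩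
      have hd : (e W).1 = (e W).2 := (hcol W).1 hw2
      rcases dec_diag_class _ hd with h | h | h
      · left; rw [← h, e.symm_apply_apply]
      · right; left; rw [← h, e.symm_apply_apply]
      · right; right; rw [← h, e.symm_apply_apply]
    · have key : ∀ p : Fin 3 × Fin 3, p.1 = p.2 → (e.symm p).1 ∈ sameNbrs G c v := by
        intro p hp
        refine ⟨(e.symm p).2, (hcol (e.symm p)).2 ?_⟩
        rw [e.apply_symm_apply]; exact hp
      rintro (rfl | rfl | rfl)
      · exact key (0, 0) rfl
      · exact key (1, 1) rfl
      · exact key (2, 2) rfl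

lemma common_unique (hloc : LocallyLikeWF4 G c) (v : V) :
    ∀ x ∈ sameNbrs G c v, ∀ y ∈ offNbrs G c v, ∀ z ∈ offNbrs G c v,
      G.Adj x y → G.Adj x z → (z = y ∨ G.Adj y z) := by
  intro x hx y hy z hz hxy hxz
  obtain ⟨e, hcol⟩ := exists_coords hloc v
  set X : G.neighborSet v := ⟨x, hx.1⟩
  set Y : G.neighborSet v := ⟨y, hy.1⟩
  set Z : G.neighborSet v := ⟨z, hz.1⟩
  have hpd : (e X).1 = (e X).2 := (hcol X).1 hx.2
  have hqd : (e Y).1 ≠ (e Y).2 := fun h => hy.2 ((hcol Y).2 h)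
  have hrd : (e Z).1 ≠ (e Z).2 := fun h => hz.2 ((hcol Z).2 h)
  have haq : A3 (e X) (e Y) := (wb3_adj_iff _ _).1 (e.map_adj_iff.2 hxy)
  have har : A3 (e X) (e Z) := (wb3_adj_iff _ _).1 (e.map_adj_iff.2 hxz)
  rcases dec_common _ _ _ hpd hqd hrd haq har with h | h
  · exact Or.inl (congrArg Subtype.val (e.toEquiv.injective h))
  · exact Or.inr (e.map_adj_iff.1 ((wb3_adj_iff _ _).2 h))

lemma distinct_attach (hloc : LocallyLikeWF4 G c) (v : V) :
    ∀ x ∈ sameNbrs G c v, ∀ x' ∈ sameNbrs G c v, x ≠ x' →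
      ∀ y ∈ offNbrs G c v, ∀ z ∈ offNbrs G c v,
      G.Adj x y → G.Adj x' z → ¬(z = y ∨ G.Adj y z) := by
  intro x hx x' hx' hne y hy z hz hxy hxz
  obtain ⟨e, hcol⟩ := exists_coords hloc v
  set X : G.neighborSet v := ⟨x, hx.1⟩
  set X' : G.neighborSet v := ⟨x', hx'.1⟩
  set Y : G.neighborSet v := ⟨y, hy.1⟩
  set Z : G.neighborSet v := ⟨z, hz.1⟩
  have hpd : (e X).1 = (e X).2 := (hcol X).1 hx.2
  have hpd' : (e X').1 = (e X').2 := (hcol X').1 hx'.2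
  have hXX : e X ≠ e X' := fun h => hne (congrArg Subtype.val (e.toEquiv.injective h))
  have hqd : (e Y).1 ≠ (e Y).2 := fun h => hy.2 ((hcol Y).2 h)
  have hrd : (e Z).1 ≠ (e Z).2 := fun h => hz.2 ((hcol Z).2 h)
  have haq : A3 (e X) (e Y) := (wb3_adj_iff _ _).1 (e.map_adj_iff.2 hxy)
  have har : A3 (e X') (e Z) := (wb3_adj_iff _ _).1 (e.map_adj_iff.2 hxz)
  rintro (rfl | h)
  · exact dec_distinct _ _ _ _ hpd hpd' hXX hqd hrd haq har (Or.inl rfl)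
  · exact dec_distinct _ _ _ _ hpd hpd' hXX hqd hrd haq har
      (Or.inr ((wb3_adj_iff _ _).1 (e.map_adj_iff.2 h)))

lemma attach_exists (hloc : LocallyLikeWF4 G c) (v : V) :
    ∀ y ∈ offNbrs G c v, ∃ x ∈ sameNbrs G c v, G.Adj x y := by
  intro y hy
  obtain ⟨e, hcol⟩ := exists_coords hloc v
  set Y : G.neighborSet v := ⟨y, hy.1⟩
  have hqd : (e Y).1 ≠ (e Y).2 := fun h => hy.2 ((hcol Y).2 h)
  obtain ⟨p, hpd, hA⟩ := dec_attach _ hqd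
  refine ⟨(e.symm p).1, ⟨(e.symm p).2, (hcol (e.symm p)).2 (by rw [e.apply_symm_apply]; exact hpd)⟩, ?_⟩
  have : A3 (e (e.symm p)) (e Y) := by rw [e.apply_symm_apply]; exact hA
  exact e.map_adj_iff.1 ((wb3_adj_iff _ _).2 this)

lemma attach_unique (hloc : LocallyLikeWF4 G c) (v : V) :
    ∀ x ∈ sameNbrs G c v, ∀ x' ∈ sameNbrs G c v, x ≠ x' → ∀ y ∈ offNbrs G c v,
      G.Adj x y → G.Adj x' y → False := by
  intro x hx x' hx' hne y hy hxy hx'y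
  obtain ⟨e, hcol⟩ := exists_coords hloc v
  set X : G.neighborSet v := ⟨x, hx.1⟩
  set X' : G.neighborSet v := ⟨x', hx'.1⟩
  set Y : G.neighborSet v := ⟨y, hy.1⟩
  have hpd : (e X).1 = (e X).2 := (hcol X).1 hx.2
  have hpd' : (e X').1 = (e X').2 := (hcol X').1 hx'.2
  have hXX : e X ≠ e X' := fun h => hne (congrArg Subtype.val (e.toEquiv.injective h))
  have hqd : (e Y).1 ≠ (e Y).2 := fun h => hy.2 ((hcol Y).2 h)
  exact dec_attach_unique _ _ _ hpd hpd' hXX hqd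
    ((wb3_adj_iff _ _).1 (e.map_adj_iff.2 hxy))
    ((wb3_adj_iff _ _).1 (e.map_adj_iff.2 hx'y))

lemma pair_exists (hloc : LocallyLikeWF4 G c) (v : V) :
    ∀ x ∈ sameNbrs G c v, ∃ y ∈ offNbrs G c v, ∃ y' ∈ offNbrs G c v,
      y ≠ y' ∧ G.Adj y y' ∧ G.Adj x y ∧ G.Adj x y' := by
  intro x hx
  obtain ⟨e, hcol⟩ := exists_coords hloc v
  set X : G.neighborSet v := ⟨x, hx.1⟩
  have hpd : (e X).1 = (e X).2 := (hcol X).1 hx.2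
  obtain ⟨q, r, hq, hr, hqr, hA, hAq, hAr⟩ := dec_pair _ hpd
  have offmem : ∀ s : Fin 3 × Fin 3, s.1 ≠ s.2 → (e.symm s).1 ∈ offNbrs G c v := by
    intro s hs
    exact ⟨(e.symm s).2, fun h => hs (by
      have := (hcol (e.symm s)).1 h
      rwa [e.apply_symm_apply] at this)⟩
  have adjX : ∀ s : Fin 3 × Fin 3, A3 (e X) s → G.Adj x (e.symm s).1 := by
    intro s hA3
    have : A3 (e X) (e (e.symm s)) := by rw [e.apply_symm_apply]; exact hA3
    exact e.map_adj_iff.1 ((wb3_adj_iff _ _).2 this)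
  refine ⟨(e.symm q).1, offmem q hq, (e.symm r).1, offmem r hr, ?_, ?_, adjX q hAq, adjX r hAr⟩
  · exact fun h => hqr (e.symm.toEquiv.injective (Subtype.coe_injective h))
  · have : A3 (e (e.symm q)) (e (e.symm r)) := by rw [e.apply_symm_apply, e.apply_symm_apply]; exact hA
    exact e.map_adj_iff.1 ((wb3_adj_iff _ _).2 this)

end Aux

namespace Aux

lemma bne {a b cc : Bool} (h1 : a ≠ cc) (h2 : b ≠ cc) : a = b := by
  revert h1 h2; revert a b cc; decide

section ncards
variable {α : Type} {x y z w u t : α}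

lemma fin2 : ({y, z} : Set α).Finite := (Set.finite_singleton z).insert y
lemma fin3 : ({x, y, z} : Set α).Finite := fin2.insert x
lemma fin4 : ({w, x, y, z} : Set α).Finite := fin3.insert w
lemma fin5 : ({u, w, x, y, z} : Set α).Finite := fin4.insert u
lemma fin6 : ({t, u, w, x, y, z} : Set α).Finite := fin5.insert t

lemma ncard3 (h1 : x ≠ y) (h2 : x ≠ z) (h3 : y ≠ z) : ({x, y, z} : Set α).ncard = 3 := by
  rw [Set.ncard_insert_of_notMem (by simp [h1, h2]) fin2, Set.ncard_pair h3]

lemma ncard4 (h1 : w ≠ x) (h2 : w ≠ y) (h3 : w ≠ z) (h4 : x ≠ y) (h5 : x ≠ z) (h6 : y ≠ z) :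
    ({w, x, y, z} : Set α).ncard = 4 := by
  rw [Set.ncard_insert_of_notMem (by simp [h1, h2, h3]) fin3, ncard3 h4 h5 h6]

lemma ncard5 (h1 : u ≠ w) (h2 : u ≠ x) (h3 : u ≠ y) (h4 : u ≠ z) (h5 : w ≠ x) (h6 : w ≠ y)
    (h7 : w ≠ z) (h8 : x ≠ y) (h9 : x ≠ z) (h10 : y ≠ z) :
    ({u, w, x, y, z} : Set α).ncard = 5 := by
  rw [Set.ncard_insert_of_notMem (by simp [h1, h2, h3, h4]) fin4, ncard4 h5 h6 h7 h8 h9 h10]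

lemma ncard6 (h1 : t ≠ u) (h2 : t ≠ w) (h3 : t ≠ x) (h4 : t ≠ y) (h5 : t ≠ z) (h6 : u ≠ w)
    (h7 : u ≠ x) (h8 : u ≠ y) (h9 : u ≠ z) (h10 : w ≠ x) (h11 : w ≠ y) (h12 : w ≠ z)
    (h13 : x ≠ y) (h14 : x ≠ z) (h15 : y ≠ z) :
    ({t, u, w, x, y, z} : Set α).ncard = 6 := by
  rw [Set.ncard_insert_of_notMem (by simp [h1, h2, h3, h4, h5]) fin5,
    ncard5 h6 h7 h8 h9 h10 h11 h12 h13 h14 h15]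

end ncards

variable {V : Type} {G : SimpleGraph V} {c : V → Bool}

lemma mem_blockOf_self (v : V) : v ∈ blockOf G c v := ⟨rfl, SimpleGraph.Reachable.refl _⟩

lemma color_of_mem_blockOf {v w : V} (h : w ∈ blockOf G c v) : c w = c v := h.1

lemma triple_mem {α : Type} {p q r x : α} (hpq : p ≠ q) (hpr : p ≠ r) (hqr : q ≠ r)
    (hx : x ∈ ({p, q, r} : Set α)) :
    ∃ u w, u ≠ w ∧ x ≠ u ∧ x ≠ w ∧ ({p, q, r} : Set α) = {x, u, w} := by
  rcases hx with rfl | rfl | rfl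
  · exact ⟨q, r, hqr, hpq, hpr, rfl⟩
  · exact ⟨p, r, hpr, hpq.symm, hqr, by ext t; simp; tauto⟩
  · exact ⟨p, q, hpq, hpr.symm, hqr.symm, by ext t; simp; tauto⟩

lemma sameNbrs_ncard (hloc : LocallyLikeWF4 G c) (v : V) :
    (sameNbrs G c v).ncard = 3 ∧ (sameNbrs G c v).Finite := by
  obtain ⟨a, b, d, h1, h2, h3, hs⟩ := exists_three hloc v
  rw [hs]
  exact ⟨ncard3 h1 h2 h3, fin3⟩

lemma closure (hloc : LocallyLikeWF4 G c) (v : V) :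
    ∀ x ∈ insert v (sameNbrs G c v), ∀ y : V, G.Adj x y → c y = c v →
      y ∈ insert v (sameNbrs G c v) := by
  intro x hx y hxy hcy
  rcases hx with rfl | hx
  · exact Or.inr ⟨hxy, hcy⟩
  by_contra hy
  have hyv : y ≠ v := fun h => hy (h ▸ Set.mem_insert _ _)
  have hyS : y ∉ sameNbrs G c v := fun h => hy (Or.inr h)
  obtain ⟨p, q, r, h1, h2, h3, hs⟩ := exists_three hloc v
  obtain ⟨u, w, huw, hxu, hxw, hrepr⟩ := triple_mem h1 h2 h3 (hs ▸ hx)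
  have hu : u ∈ sameNbrs G c v := by rw [hs, hrepr]; simp
  have hw : w ∈ sameNbrs G c v := by rw [hs, hrepr]; simp
  have hsub : ({v, y, u, w} : Set V) ⊆ sameNbrs G c x := by
    rintro t (rfl | rfl | rfl | rfl)
    · exact ⟨hx.1.symm, hx.2.symm⟩
    · exact ⟨hxy, hcy.trans hx.2.symm⟩
    · exact ⟨sameNbrs_adj hloc v x hx _ hu hxu, hu.2.trans hx.2.symm⟩
    · exact ⟨sameNbrs_adj hloc v x hx _ hw hxw, hw.2.trans hx.2.symm⟩
  have hvy : v ≠ y := fun h => hyv (h.symm)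
  have hvu : v ≠ u := fun h => (G.loopless.irrefl v) (h ▸ hu.1)
  have hvw : v ≠ w := fun h => (G.loopless.irrefl v) (h ▸ hw.1)
  have hyu : y ≠ u := fun h => hyS (h ▸ hu)
  have hyw : y ≠ w := fun h => hyS (h ▸ hw)
  have h4 : ({v, y, u, w} : Set V).ncard = 4 := ncard4 hvy hvu hvw hyu hyw huw
  have hle := Set.ncard_le_ncard hsub (sameNbrs_ncard hloc x).2
  rw [h4, (sameNbrs_ncard hloc x).1] at hle
  omega

lemma blockOf_eq (hloc : LocallyLikeWF4 G c) (v : V) :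
    blockOf G c v = insert v (sameNbrs G c v) := by
  apply Set.Subset.antisymm
  · rintro w ⟨hw, hr⟩
    have key : ∀ (x y : {z : V | c z = c v})
        (_ : (G.induce {z : V | c z = c v}).Walk x y),
        x.1 ∈ insert v (sameNbrs G c v) → y.1 ∈ insert v (sameNbrs G c v) := by
      intro x y p
      induction p with
      | nil => exact id
      | @cons a2 b2 d2 h p ih =>
        intro hx
        exact ih (closure hloc v _ hx _ h b2.2)
    obtain ⟨p⟩ := hr.symm
    exact key _ _ p (Set.mem_insert _ _)
  · rintro w (rfl | hw)
    · exact mem_blockOf_self w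
    · exact ⟨hw.2, SimpleGraph.Adj.reachable (by exact hw.1.symm)⟩

lemma blockOf_eq_of_adj (hloc : LocallyLikeWF4 G c) {y y' : V} (h : G.Adj y y')
    (hc : c y' = c y) : blockOf G c y = blockOf G c y' := by
  rw [blockOf_eq hloc, blockOf_eq hloc]
  have key : ∀ y y' : V, G.Adj y y' → c y' = c y →
      insert y' (sameNbrs G c y') ⊆ insert y (sameNbrs G c y) := by
    intro y y' h hc
    rintro x (rfl | hx)
    · exact Or.inr ⟨h, hc⟩
    · exact closure hloc y y' (Or.inr ⟨h, hc⟩) x hx.1 (hx.2.trans hc)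
  exact Set.Subset.antisymm (key y' y h.symm hc.symm) (key y y' h hc)

lemma blockOf_eq_iff (hloc : LocallyLikeWF4 G c) {y z : V} :
    blockOf G c y = blockOf G c z ↔ (z = y ∨ (G.Adj y z ∧ c z = c y)) := by
  constructor
  · intro h
    have hz : z ∈ blockOf G c y := h ▸ mem_blockOf_self z
    rw [blockOf_eq hloc] at hz
    rcases hz with rfl | hz
    · exact Or.inl rfl
    · exact Or.inr ⟨hz.1, hz.2⟩
  · rintro (rfl | ⟨h1, h2⟩)
    · rfl
    · exact blockOf_eq_of_adj hloc h1 h2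

lemma blockOf_eq_of_mem (hloc : LocallyLikeWF4 G c) {u w : V} (h : w ∈ blockOf G c u) :
    blockOf G c w = blockOf G c u := by
  rw [blockOf_eq hloc] at h
  rcases h with rfl | h
  · rfl
  · exact (blockOf_eq_of_adj hloc h.1 h.2).symm

lemma block_ne_off (hloc : LocallyLikeWF4 G c) {x y : V} (hy : y ∈ offNbrs G c x) :
    blockOf G c x ≠ blockOf G c y := by
  intro h
  rcases (blockOf_eq_iff hloc).1 h with rfl | ⟨_, h2⟩
  · exact G.loopless.irrefl y hy.1
  · exact hy.2 h2

lemma common_block (hloc : LocallyLikeWF4 G c) (v : V) {x y z : V} (hx : x ∈ sameNbrs G c v)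
    (hy : y ∈ offNbrs G c v) (hz : z ∈ offNbrs G c v) (h1 : G.Adj x y) (h2 : G.Adj x z) :
    blockOf G c y = blockOf G c z := by
  rcases common_unique hloc v x hx y hy z hz h1 h2 with rfl | h
  · rfl
  · exact blockOf_eq_of_adj hloc h (bne hz.2 hy.2)

lemma distinct_block (hloc : LocallyLikeWF4 G c) (v : V) {x x' y z : V}
    (hx : x ∈ sameNbrs G c v) (hx' : x' ∈ sameNbrs G c v) (hne : x ≠ x')
    (hy : y ∈ offNbrs G c v) (hz : z ∈ offNbrs G c v) (h1 : G.Adj x y) (h2 : G.Adj x' z) :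
    blockOf G c y ≠ blockOf G c z := by
  intro h
  exact distinct_attach hloc v x hx x' hx' hne y hy z hz h1 h2
    (((blockOf_eq_iff hloc).1 h).imp id And.left)

end Aux

namespace Aux

variable {V : Type} {G : SimpleGraph V} {c : V → Bool}

lemma strong_of_matched (hloc : LocallyLikeWF4 G c) (v x1 x2 x3 y y' z z' : V)
    (hx1 : x1 ∈ sameNbrs G c v) (hx2 : x2 ∈ sameNbrs G c v) (hx3 : x3 ∈ sameNbrs G c v)
    (h13 : x1 ≠ x3) (hS : sameNbrs G c v = {x1, x2, x3})
    (hy : y ∈ offNbrs G c v) (hy' : y' ∈ offNbrs G c v) (hyne : y ≠ y') (hyy : G.Adj y y')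
    (hx1y : G.Adj x1 y) (hx1y' : G.Adj x1 y')
    (hz : z ∈ offNbrs G c x2) (hz' : z' ∈ offNbrs G c x2) (hzne : z ≠ z') (hzz : G.Adj z z')
    (hx3z : G.Adj x3 z) (hx3z' : G.Adj x3 z')
    (hmatch : blockOf G c y = blockOf G c z) :
    stronglyConn G (blockOf G c v) (blockOf G c y) := by
  have hXeq : blockOf G c v = insert v {x1, x2, x3} := by rw [blockOf_eq hloc, hS]
  have hyz : y ≠ z := fun h =>
    attach_unique hloc v x1 hx1 x3 hx3 h13 y hy hx1y (by rw [h]; exact hx3z)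
  have hyz' : y ≠ z' := fun h =>
    attach_unique hloc v x1 hx1 x3 hx3 h13 y hy hx1y (by rw [h]; exact hx3z')
  have hy'z : y' ≠ z := fun h =>
    attach_unique hloc v x1 hx1 x3 hx3 h13 y' hy' hx1y' (by rw [h]; exact hx3z)
  have hy'z' : y' ≠ z' := fun h =>
    attach_unique hloc v x1 hx1 x3 hx3 h13 y' hy' hx1y' (by rw [h]; exact hx3z')
  have hby' : blockOf G c y = blockOf G c y' := blockOf_eq_of_adj hloc hyy (bne hy'.2 hy.2)
  have hbz' : blockOf G c z = blockOf G c z' := blockOf_eq_of_adj hloc hzz (bne hz'.2 hz.2)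
  have hymem : y ∈ blockOf G c y := mem_blockOf_self y
  have hy'mem : y' ∈ blockOf G c y := by rw [hby']; exact mem_blockOf_self y'
  have hzmem : z ∈ blockOf G c y := by rw [hmatch]; exact mem_blockOf_self z
  have hz'mem : z' ∈ blockOf G c y := by rw [hmatch, hbz']; exact mem_blockOf_self z'
  have hsub : ({y, y', z, z'} : Set V) ⊆ blockOf G c y := by
    rintro t (rfl | rfl | rfl | rfl) <;> assumption
  have hcard : ({y, y', z, z'} : Set V).ncard = 4 := ncard4 hyne hyz hyz' hy'z hy'z' hzne
  have hbfin : (blockOf G c y).Finite := by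
    rw [blockOf_eq hloc]; exact ((sameNbrs_ncard hloc y).2.insert y)
  have hble : (blockOf G c y).ncard ≤ 4 := by
    rw [blockOf_eq hloc]
    calc (insert y (sameNbrs G c y)).ncard ≤ (sameNbrs G c y).ncard + 1 :=
        Set.ncard_insert_le _ _
      _ ≤ 4 := by rw [(sameNbrs_ncard hloc y).1]
  have hBeq : blockOf G c y = {y, y', z, z'} :=
    (Set.eq_of_subset_of_ncard_le hsub (by rw [hcard]; exact hble) hbfin).symm
  have hvX : v ∈ blockOf G c v := mem_blockOf_self v
  have hx2X : x2 ∈ blockOf G c v := by rw [hXeq]; simp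
  refine ⟨block_ne_off hloc hy, ?_, ?_⟩
  · intro t ht
    rw [hXeq] at ht
    rcases ht with rfl | rfl | rfl | rfl
    · exact ⟨y, hymem, hy.1⟩
    · exact ⟨y, hymem, hx1y⟩
    · exact ⟨z, hzmem, hz.1⟩
    · exact ⟨z, hzmem, hx3z⟩
  · intro t ht
    rw [hBeq] at ht
    rcases ht with rfl | rfl | rfl | rfl
    · exact ⟨v, hvX, hy.1⟩
    · exact ⟨v, hvX, hy'.1⟩
    · exact ⟨x2, hx2X, hz.1⟩
    · exact ⟨x2, hx2X, hz'.1⟩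

end Aux

open Aux in
set_option maxHeartbeats 1000000 in
theorem contraction_bipartite_of_bivalency_six {V : Type} (G : SimpleGraph V) (c : V → Bool)
    (hloc : LocallyLikeWF4 G c) :
    (∀ B ∈ blockPartition G c, ∀ B' ∈ blockPartition G c, blockAdj G B B' →
      ∀ a ∈ B, ∀ a' ∈ B', c a ≠ c a') ∧
    (∀ B ∈ blockPartition G c,
      {B' ∈ blockPartition G c | blockAdj G B B'}.ncard +
      {B' ∈ blockPartition G c | stronglyConn G B B'}.ncard = 6) := by
  constructor
  · intro B hB B' hB' hadj p hp p' hp' hcc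
    obtain ⟨u, rfl⟩ : ∃ u, blockOf G c u = B := hB
    obtain ⟨u', rfl⟩ : ∃ u', blockOf G c u' = B' := hB'
    have hne := hadj.1
    obtain ⟨x, hx, w, hw, hxw⟩ := hadj.2
    apply hne
    have h1 : c w = c x :=
      (color_of_mem_blockOf hw).trans ((color_of_mem_blockOf hp').symm.trans
        (hcc.symm.trans ((color_of_mem_blockOf hp).trans (color_of_mem_blockOf hx).symm)))
    rw [← blockOf_eq_of_mem hloc hx, ← blockOf_eq_of_mem hloc hw]
    exact blockOf_eq_of_adj hloc hxw h1
  · intro B hB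
    obtain ⟨v, rfl⟩ : ∃ v, blockOf G c v = B := hB
    obtain ⟨a, b, d, hab, had, hbd, hS⟩ := exists_three hloc v
    have hav : a ∈ sameNbrs G c v := by rw [hS]; simp
    have hbv : b ∈ sameNbrs G c v := by rw [hS]; simp
    have hdv : d ∈ sameNbrs G c v := by rw [hS]; simp
    have hca : c a = c v := hav.2
    have hcb : c b = c v := hbv.2
    have hcd : c d = c v := hdv.2
    have hvna : v ≠ a := hav.1.ne
    have hvnb : v ≠ b := hbv.1.ne
    have hvnd : v ≠ d := hdv.1.ne
    have hAab : G.Adj a b := sameNbrs_adj hloc v a hav b hbv hab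
    have hAad : G.Adj a d := sameNbrs_adj hloc v a hav d hdv had
    have hAbd : G.Adj b d := sameNbrs_adj hloc v b hbv d hdv hbd
    have hva : v ∈ sameNbrs G c a := ⟨hav.1.symm, hca.symm⟩
    have hba : b ∈ sameNbrs G c a := ⟨hAab, hcb.trans hca.symm⟩
    have hda : d ∈ sameNbrs G c a := ⟨hAad, hcd.trans hca.symm⟩
    have hvb : v ∈ sameNbrs G c b := ⟨hbv.1.symm, hcb.symm⟩
    have hab' : a ∈ sameNbrs G c b := ⟨hAab.symm, hca.trans hcb.symm⟩
    have hdb : d ∈ sameNbrs G c b := ⟨hAbd, hcd.trans hcb.symm⟩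
    have hvd : v ∈ sameNbrs G c d := ⟨hdv.1.symm, hcd.symm⟩
    have had' : a ∈ sameNbrs G c d := ⟨hAad.symm, hca.trans hcd.symm⟩
    have hbd' : b ∈ sameNbrs G c d := ⟨hAbd.symm, hcb.trans hcd.symm⟩
    have hSa : sameNbrs G c a = {v, b, d} := by
      refine (Set.eq_of_subset_of_ncard_le ?_ ?_ (sameNbrs_ncard hloc a).2).symm
      · rintro t (rfl | rfl | rfl); exacts [hva, hba, hda]
      · rw [(sameNbrs_ncard hloc a).1, ncard3 hvnb hvnd hbd]
    have hSb : sameNbrs G c b = {v, a, d} := by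
      refine (Set.eq_of_subset_of_ncard_le ?_ ?_ (sameNbrs_ncard hloc b).2).symm
      · rintro t (rfl | rfl | rfl); exacts [hvb, hab', hdb]
      · rw [(sameNbrs_ncard hloc b).1, ncard3 hvna hvnd had]
    have hSd : sameNbrs G c d = {v, a, b} := by
      refine (Set.eq_of_subset_of_ncard_le ?_ ?_ (sameNbrs_ncard hloc d).2).symm
      · rintro t (rfl | rfl | rfl); exacts [hvd, had', hbd']
      · rw [(sameNbrs_ncard hloc d).1, ncard3 hvna hvnb hab]
    obtain ⟨y1, hy1, y1', hy1', hy1ne, hy1adj, hay1, hay1'⟩ := pair_exists hloc v a hav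
    obtain ⟨y2, hy2, y2', hy2', hy2ne, hy2adj, hby2, hby2'⟩ := pair_exists hloc v b hbv
    obtain ⟨y3, hy3, y3', hy3', hy3ne, hy3adj, hdy3, hdy3'⟩ := pair_exists hloc v d hdv
    obtain ⟨z1, hz1, z1', hz1', hz1ne, hz1adj, hdz1, hdz1'⟩ := pair_exists hloc b d hdb
    obtain ⟨z2, hz2, z2', hz2', hz2ne, hz2adj, hdz2, hdz2'⟩ := pair_exists hloc a d hda
    obtain ⟨z3, hz3, z3', hz3', hz3ne, hz3adj, hbz3, hbz3'⟩ := pair_exists hloc a b hba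
    have off_rebase : ∀ {x x' w : V}, c x = c x' → w ∈ offNbrs G c x → G.Adj x' w →
        w ∈ offNbrs G c x' := fun hcc hw hadj => ⟨hadj, fun h => hw.2 (h.trans hcc.symm)⟩
    have hz1d : z1 ∈ offNbrs G c d := off_rebase (hcb.trans hcd.symm) hz1 hdz1
    have hz1'd : z1' ∈ offNbrs G c d := off_rebase (hcb.trans hcd.symm) hz1' hdz1'
    have hz2d : z2 ∈ offNbrs G c d := off_rebase (hca.trans hcd.symm) hz2 hdz2
    have hz3b : z3 ∈ offNbrs G c b := off_rebase (hca.trans hcb.symm) hz3 hbz3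
    have hy1a : y1 ∈ offNbrs G c a := off_rebase hca.symm hy1 hay1
    have hy2b : y2 ∈ offNbrs G c b := off_rebase hcb.symm hy2 hby2
    have hy3d : y3 ∈ offNbrs G c d := off_rebase hcd.symm hy3 hdy3
    set Q1 : Set V := blockOf G c y1 with hQ1
    set Q2 : Set V := blockOf G c y2 with hQ2
    set Q3 : Set V := blockOf G c y3 with hQ3
    set R1 : Set V := blockOf G c z1 with hR1
    set R2 : Set V := blockOf G c z2 with hR2
    set R3 : Set V := blockOf G c z3 with hR3
    have dQ12 : Q1 ≠ Q2 := distinct_block hloc v hav hbv hab hy1 hy2 hay1 hby2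
    have dQ13 : Q1 ≠ Q3 := distinct_block hloc v hav hdv had hy1 hy3 hay1 hdy3
    have dQ23 : Q2 ≠ Q3 := distinct_block hloc v hbv hdv hbd hy2 hy3 hby2 hdy3
    have dR12 : R1 ≠ R2 := distinct_block hloc d hbd' had' hab.symm hz1d hz2d hz1.1 hz2.1
    have dR13 : R1 ≠ R3 := distinct_block hloc b hdb hab' (Ne.symm had) hz1 hz3b hdz1 hz3.1
    have dR23 : R2 ≠ R3 := distinct_block hloc a hda hba (Ne.symm hbd) hz2 hz3 hdz2 hbz3
    have dQ1R2 : Q1 ≠ R2 := distinct_block hloc a hva hda hvnd hy1a hz2 hy1.1 hdz2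
    have dQ1R3 : Q1 ≠ R3 := distinct_block hloc a hva hba hvnb hy1a hz3 hy1.1 hbz3
    have dQ2R1 : Q2 ≠ R1 := distinct_block hloc b hvb hdb hvnd hy2b hz1 hy2.1 hdz1
    have dQ2R3 : Q2 ≠ R3 := distinct_block hloc b hvb hab' hvna hy2b hz3b hy2.1 hz3.1
    have dQ3R1 : Q3 ≠ R1 := distinct_block hloc d hvd hbd' hvnb hy3d hz1d hy3.1 hz1.1
    have dQ3R2 : Q3 ≠ R2 := distinct_block hloc d hvd had' hvna hy3d hz2d hy3.1 hz2.1
    have hXa : a ∈ blockOf G c v := by rw [blockOf_eq hloc]; exact Or.inr hav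
    have hXb : b ∈ blockOf G c v := by rw [blockOf_eq hloc]; exact Or.inr hbv
    have hXd : d ∈ blockOf G c v := by rw [blockOf_eq hloc]; exact Or.inr hdv
    have cover : ∀ x w u : V, (x = v ∨ x = a ∨ x = b ∨ x = d) → G.Adj x w → c w ≠ c x →
        blockOf G c w = blockOf G c u →
        blockOf G c u = Q1 ∨ blockOf G c u = Q2 ∨ blockOf G c u = Q3 ∨
        blockOf G c u = R1 ∨ blockOf G c u = R2 ∨ blockOf G c u = R3 := by
      rintro x w u hx hxw hcw hwu
      rcases hx with h | h | h | h <;> rw [h] at hxw hcw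
      · have hwoff : w ∈ offNbrs G c v := ⟨hxw, hcw⟩
        obtain ⟨x', hx', hx'w⟩ := attach_exists hloc v w hwoff
        rw [hS] at hx'
        rcases hx' with h' | h' | h' <;> rw [h'] at hx'w
        · exact Or.inl (hwu.symm.trans (common_block hloc v hav hy1 hwoff hay1 hx'w).symm)
        · exact Or.inr (Or.inl
            (hwu.symm.trans (common_block hloc v hbv hy2 hwoff hby2 hx'w).symm))
        · exact Or.inr (Or.inr (Or.inl
            (hwu.symm.trans (common_block hloc v hdv hy3 hwoff hdy3 hx'w).symm)))
      · have hwoff : w ∈ offNbrs G c a := ⟨hxw, hcw⟩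
        obtain ⟨x', hx', hx'w⟩ := attach_exists hloc a w hwoff
        rw [hSa] at hx'
        rcases hx' with h' | h' | h' <;> rw [h'] at hx'w
        · have hwv : w ∈ offNbrs G c v := ⟨hx'w, fun hh => hcw (hh.trans hca.symm)⟩
          exact Or.inl (hwu.symm.trans (common_block hloc v hav hy1 hwv hay1 hxw).symm)
        · exact Or.inr (Or.inr (Or.inr (Or.inr (Or.inr
            (hwu.symm.trans (common_block hloc a hba hz3 hwoff hbz3 hx'w).symm)))))
        · exact Or.inr (Or.inr (Or.inr (Or.inr (Or.inl
            (hwu.symm.trans (common_block hloc a hda hz2 hwoff hdz2 hx'w).symm)))))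
      · have hwoff : w ∈ offNbrs G c b := ⟨hxw, hcw⟩
        obtain ⟨x', hx', hx'w⟩ := attach_exists hloc b w hwoff
        rw [hSb] at hx'
        rcases hx' with h' | h' | h' <;> rw [h'] at hx'w
        · have hwv : w ∈ offNbrs G c v := ⟨hx'w, fun hh => hcw (hh.trans hcb.symm)⟩
          exact Or.inr (Or.inl
            (hwu.symm.trans (common_block hloc v hbv hy2 hwv hby2 hxw).symm))
        · exact Or.inr (Or.inr (Or.inr (Or.inr (Or.inr
            (hwu.symm.trans (common_block hloc b hab' hz3b hwoff hz3.1 hx'w).symm)))))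
        · exact Or.inr (Or.inr (Or.inr (Or.inl
            (hwu.symm.trans (common_block hloc b hdb hz1 hwoff hdz1 hx'w).symm))))
      · have hwoff : w ∈ offNbrs G c d := ⟨hxw, hcw⟩
        obtain ⟨x', hx', hx'w⟩ := attach_exists hloc d w hwoff
        rw [hSd] at hx'
        rcases hx' with h' | h' | h' <;> rw [h'] at hx'w
        · have hwv : w ∈ offNbrs G c v := ⟨hx'w, fun hh => hcw (hh.trans hcd.symm)⟩
          exact Or.inr (Or.inr (Or.inl
            (hwu.symm.trans (common_block hloc v hdv hy3 hwv hdy3 hxw).symm)))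
        · exact Or.inr (Or.inr (Or.inr (Or.inr (Or.inl
            (hwu.symm.trans (common_block hloc d had' hz2d hwoff hz2.1 hx'w).symm)))))
        · exact Or.inr (Or.inr (Or.inr (Or.inl
            (hwu.symm.trans (common_block hloc d hbd' hz1d hwoff hz1.1 hx'w).symm))))
    have hAdjSet : {B' ∈ blockPartition G c | blockAdj G (blockOf G c v) B'} =
        {Q1, Q2, Q3, R1, R2, R3} := by
      ext B'
      simp only [Set.mem_sep_iff, Set.mem_insert_iff, Set.mem_singleton_iff]
      constructor
      · rintro ⟨hB', hne, x, hx, w, hw, hxw⟩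
        obtain ⟨u, rfl⟩ : ∃ u, blockOf G c u = B' := hB'
        have hwu : blockOf G c w = blockOf G c u := blockOf_eq_of_mem hloc hw
        have hxV : blockOf G c x = blockOf G c v := blockOf_eq_of_mem hloc hx
        have hcw : c w ≠ c x := by
          intro hcc
          exact hne (by rw [← hxV, blockOf_eq_of_adj hloc hxw hcc, hwu])
        rw [blockOf_eq hloc, hS] at hx
        exact cover x w u (by simpa using hx) hxw hcw hwu
      · have hbV : blockOf G c b = blockOf G c v := blockOf_eq_of_mem hloc hXb
        have haV : blockOf G c a = blockOf G c v := blockOf_eq_of_mem hloc hXa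
        rintro (rfl | rfl | rfl | rfl | rfl | rfl)
        · exact ⟨⟨y1, rfl⟩, block_ne_off hloc hy1,
            v, mem_blockOf_self v, y1, mem_blockOf_self y1, hy1.1⟩
        · exact ⟨⟨y2, rfl⟩, block_ne_off hloc hy2,
            v, mem_blockOf_self v, y2, mem_blockOf_self y2, hy2.1⟩
        · exact ⟨⟨y3, rfl⟩, block_ne_off hloc hy3,
            v, mem_blockOf_self v, y3, mem_blockOf_self y3, hy3.1⟩
        · exact ⟨⟨z1, rfl⟩, by rw [← hbV]; exact block_ne_off hloc hz1,
            b, hXb, z1, mem_blockOf_self z1, hz1.1⟩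
        · exact ⟨⟨z2, rfl⟩, by rw [← haV]; exact block_ne_off hloc hz2,
            a, hXa, z2, mem_blockOf_self z2, hz2.1⟩
        · exact ⟨⟨z3, rfl⟩, by rw [← haV]; exact block_ne_off hloc hz3,
            a, hXa, z3, mem_blockOf_self z3, hz3.1⟩
    have hStrongSet : {B' ∈ blockPartition G c | stronglyConn G (blockOf G c v) B'} =
        {B' : Set V | (Q1 = R1 ∧ B' = Q1) ∨ (Q2 = R2 ∧ B' = Q2) ∨ (Q3 = R3 ∧ B' = Q3)} := by
      ext B'
      simp only [Set.mem_sep_iff, Set.mem_setOf_eq]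
      constructor
      · rintro ⟨hB', hne, hXB, hBX⟩
        obtain ⟨u, rfl⟩ : ∃ u, blockOf G c u = B' := hB'
        obtain ⟨wv, hwvB, hwvadj⟩ := hXB v (mem_blockOf_self v)
        obtain ⟨wa, hwaB, hwaadj⟩ := hXB a hXa
        obtain ⟨wb, hwbB, hwbadj⟩ := hXB b hXb
        have hwvu : blockOf G c wv = blockOf G c u := blockOf_eq_of_mem hloc hwvB
        have hwau : blockOf G c wa = blockOf G c u := blockOf_eq_of_mem hloc hwaB
        have hwbu : blockOf G c wb = blockOf G c u := blockOf_eq_of_mem hloc hwbB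
        have hcwv : c wv ≠ c v := fun h =>
          hne (by rw [blockOf_eq_of_adj hloc hwvadj h, hwvu])
        have hcwa : c wa ≠ c a := fun h =>
          hne (by rw [← blockOf_eq_of_mem hloc hXa, blockOf_eq_of_adj hloc hwaadj h, hwau])
        have hcwb : c wb ≠ c b := fun h =>
          hne (by rw [← blockOf_eq_of_mem hloc hXb, blockOf_eq_of_adj hloc hwbadj h, hwbu])
        have hv3 : blockOf G c u = Q1 ∨ blockOf G c u = Q2 ∨ blockOf G c u = Q3 := by
          have hwoff : wv ∈ offNbrs G c v := ⟨hwvadj, hcwv⟩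
          obtain ⟨x', hx', hx'w⟩ := attach_exists hloc v wv hwoff
          rw [hS] at hx'
          rcases hx' with h' | h' | h' <;> rw [h'] at hx'w
          · exact Or.inl (hwvu.symm.trans (common_block hloc v hav hy1 hwoff hay1 hx'w).symm)
          · exact Or.inr (Or.inl
              (hwvu.symm.trans (common_block hloc v hbv hy2 hwoff hby2 hx'w).symm))
          · exact Or.inr (Or.inr
              (hwvu.symm.trans (common_block hloc v hdv hy3 hwoff hdy3 hx'w).symm))
        have ha3 : blockOf G c u = Q1 ∨ blockOf G c u = R3 ∨ blockOf G c u = R2 := by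
          have hwoff : wa ∈ offNbrs G c a := ⟨hwaadj, hcwa⟩
          obtain ⟨x', hx', hx'w⟩ := attach_exists hloc a wa hwoff
          rw [hSa] at hx'
          rcases hx' with h' | h' | h' <;> rw [h'] at hx'w
          · have hwv : wa ∈ offNbrs G c v := ⟨hx'w, fun h => hcwa (h.trans hca.symm)⟩
            exact Or.inl (hwau.symm.trans (common_block hloc v hav hy1 hwv hay1 hwaadj).symm)
          · exact Or.inr (Or.inl
              (hwau.symm.trans (common_block hloc a hba hz3 hwoff hbz3 hx'w).symm))
          · exact Or.inr (Or.inr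
              (hwau.symm.trans (common_block hloc a hda hz2 hwoff hdz2 hx'w).symm))
        have hb3 : blockOf G c u = Q2 ∨ blockOf G c u = R3 ∨ blockOf G c u = R1 := by
          have hwoff : wb ∈ offNbrs G c b := ⟨hwbadj, hcwb⟩
          obtain ⟨x', hx', hx'w⟩ := attach_exists hloc b wb hwoff
          rw [hSb] at hx'
          rcases hx' with h' | h' | h' <;> rw [h'] at hx'w
          · have hwv : wb ∈ offNbrs G c v := ⟨hx'w, fun h => hcwb (h.trans hcb.symm)⟩
            exact Or.inl (hwbu.symm.trans (common_block hloc v hbv hy2 hwv hby2 hwbadj).symm)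
          · exact Or.inr (Or.inl
              (hwbu.symm.trans (common_block hloc b hab' hz3b hwoff hz3.1 hx'w).symm))
          · exact Or.inr (Or.inr
              (hwbu.symm.trans (common_block hloc b hdb hz1 hwoff hdz1 hx'w).symm))
        rcases hv3 with h | h | h
        · refine Or.inl ⟨?_, h⟩
          rcases hb3 with h' | h' | h'
          · exact absurd (h.symm.trans h') dQ12
          · exact absurd (h.symm.trans h') dQ1R3
          · exact h.symm.trans h'
        · refine Or.inr (Or.inl ⟨?_, h⟩)
          rcases ha3 with h' | h' | h'
          · exact absurd (h.symm.trans h') (Ne.symm dQ12)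
          · exact absurd (h.symm.trans h') dQ2R3
          · exact h.symm.trans h'
        · refine Or.inr (Or.inr ⟨?_, h⟩)
          rcases ha3 with h' | h' | h'
          · exact absurd (h.symm.trans h') (Ne.symm dQ13)
          · exact h.symm.trans h'
          · exact absurd (h.symm.trans h') dQ3R2
      · have hS2 : sameNbrs G c v = {b, a, d} := by rw [hS]; ext t; simp; tauto
        have hS3 : sameNbrs G c v = {d, a, b} := by rw [hS]; ext t; simp; tauto
        rintro (⟨hm, rfl⟩ | ⟨hm, rfl⟩ | ⟨hm, rfl⟩)
        · exact ⟨⟨y1, rfl⟩, strong_of_matched hloc v a b d y1 y1' z1 z1' hav hbv hdv had hS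
            hy1 hy1' hy1ne hy1adj hay1 hay1' hz1 hz1' hz1ne hz1adj hdz1 hdz1' hm⟩
        · exact ⟨⟨y2, rfl⟩, strong_of_matched hloc v b a d y2 y2' z2 z2' hbv hav hdv hbd hS2
            hy2 hy2' hy2ne hy2adj hby2 hby2' hz2 hz2' hz2ne hz2adj hdz2 hdz2' hm⟩
        · exact ⟨⟨y3, rfl⟩, strong_of_matched hloc v d a b y3 y3' z3 z3' hdv hav hbv
            (Ne.symm hbd) hS3 hy3 hy3' hy3ne hy3adj hdy3 hdy3' hz3 hz3' hz3ne hz3adj hbz3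
            hbz3' hm⟩
    rw [hAdjSet, hStrongSet]
    by_cases h1 : Q1 = R1 <;> by_cases h2 : Q2 = R2 <;> by_cases h3 : Q3 = R3
    · have eA : ({Q1, Q2, Q3, R1, R2, R3} : Set (Set V)) = {Q1, Q2, Q3} := by
        ext t
        simp only [Set.mem_insert_iff, Set.mem_singleton_iff]
        constructor
        · rintro (rfl | rfl | rfl | rfl | rfl | rfl)
          · exact Or.inl (rfl)
          · exact Or.inr (Or.inl (rfl))
          · exact Or.inr (Or.inr (rfl))
          · exact Or.inl (h1.symm)
          · exact Or.inr (Or.inl (h2.symm))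
          · exact Or.inr (Or.inr (h3.symm))
        · rintro (rfl | rfl | rfl)
          · exact Or.inl (rfl)
          · exact Or.inr (Or.inl (rfl))
          · exact Or.inr (Or.inr (Or.inl (rfl)))
      have eS : {B' : Set V | (Q1 = R1 ∧ B' = Q1) ∨ (Q2 = R2 ∧ B' = Q2) ∨
          (Q3 = R3 ∧ B' = Q3)} = {Q1, Q2, Q3} := by
        ext t
        simp only [Set.mem_setOf_eq, Set.mem_insert_iff, Set.mem_singleton_iff]
        constructor
        · rintro (⟨hm, rfl⟩ | ⟨hm, rfl⟩ | ⟨hm, rfl⟩)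
          · exact Or.inl (rfl)
          · exact Or.inr (Or.inl (rfl))
          · exact Or.inr (Or.inr (rfl))
        · rintro (rfl | rfl | rfl)
          · exact Or.inl (⟨h1, rfl⟩)
          · exact Or.inr (Or.inl (⟨h2, rfl⟩))
          · exact Or.inr (Or.inr (⟨h3, rfl⟩))
      rw [eA, eS, ncard3 dQ12 dQ13 dQ23]
    · have eA : ({Q1, Q2, Q3, R1, R2, R3} : Set (Set V)) = {Q1, Q2, Q3, R3} := by
        ext t
        simp only [Set.mem_insert_iff, Set.mem_singleton_iff]
        constructor
        · rintro (rfl | rfl | rfl | rfl | rfl | rfl)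
          · exact Or.inl (rfl)
          · exact Or.inr (Or.inl (rfl))
          · exact Or.inr (Or.inr (Or.inl (rfl)))
          · exact Or.inl (h1.symm)
          · exact Or.inr (Or.inl (h2.symm))
          · exact Or.inr (Or.inr (Or.inr (rfl)))
        · rintro (rfl | rfl | rfl | rfl)
          · exact Or.inl (rfl)
          · exact Or.inr (Or.inl (rfl))
          · exact Or.inr (Or.inr (Or.inl (rfl)))
          · exact Or.inr (Or.inr (Or.inr (Or.inr (Or.inr (rfl)))))
      have eS : {B' : Set V | (Q1 = R1 ∧ B' = Q1) ∨ (Q2 = R2 ∧ B' = Q2) ∨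
          (Q3 = R3 ∧ B' = Q3)} = {Q1, Q2} := by
        ext t
        simp only [Set.mem_setOf_eq, Set.mem_insert_iff, Set.mem_singleton_iff]
        constructor
        · rintro (⟨hm, rfl⟩ | ⟨hm, rfl⟩ | ⟨hm, rfl⟩)
          · exact Or.inl (rfl)
          · exact Or.inr (rfl)
          · exact absurd hm h3
        · rintro (rfl | rfl)
          · exact Or.inl (⟨h1, rfl⟩)
          · exact Or.inr (Or.inl (⟨h2, rfl⟩))
      rw [eA, eS, ncard4 dQ12 dQ13 dQ1R3 dQ23 dQ2R3 h3, Set.ncard_pair dQ12]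
    · have eA : ({Q1, Q2, Q3, R1, R2, R3} : Set (Set V)) = {Q1, Q2, Q3, R2} := by
        ext t
        simp only [Set.mem_insert_iff, Set.mem_singleton_iff]
        constructor
        · rintro (rfl | rfl | rfl | rfl | rfl | rfl)
          · exact Or.inl (rfl)
          · exact Or.inr (Or.inl (rfl))
          · exact Or.inr (Or.inr (Or.inl (rfl)))
          · exact Or.inl (h1.symm)
          · exact Or.inr (Or.inr (Or.inr (rfl)))
          · exact Or.inr (Or.inr (Or.inl (h3.symm)))
        · rintro (rfl | rfl | rfl | rfl)
          · exact Or.inl (rfl)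
          · exact Or.inr (Or.inl (rfl))
          · exact Or.inr (Or.inr (Or.inl (rfl)))
          · exact Or.inr (Or.inr (Or.inr (Or.inr (Or.inl (rfl)))))
      have eS : {B' : Set V | (Q1 = R1 ∧ B' = Q1) ∨ (Q2 = R2 ∧ B' = Q2) ∨
          (Q3 = R3 ∧ B' = Q3)} = {Q1, Q3} := by
        ext t
        simp only [Set.mem_setOf_eq, Set.mem_insert_iff, Set.mem_singleton_iff]
        constructor
        · rintro (⟨hm, rfl⟩ | ⟨hm, rfl⟩ | ⟨hm, rfl⟩)
          · exact Or.inl (rfl)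
          · exact absurd hm h2
          · exact Or.inr (rfl)
        · rintro (rfl | rfl)
          · exact Or.inl (⟨h1, rfl⟩)
          · exact Or.inr (Or.inr (⟨h3, rfl⟩))
      rw [eA, eS, ncard4 dQ12 dQ13 dQ1R2 dQ23 h2 dQ3R2, Set.ncard_pair dQ13]
    · have eA : ({Q1, Q2, Q3, R1, R2, R3} : Set (Set V)) = {Q1, Q2, Q3, R2, R3} := by
        ext t
        simp only [Set.mem_insert_iff, Set.mem_singleton_iff]
        constructor
        · rintro (rfl | rfl | rfl | rfl | rfl | rfl)
          · exact Or.inl (rfl)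
          · exact Or.inr (Or.inl (rfl))
          · exact Or.inr (Or.inr (Or.inl (rfl)))
          · exact Or.inl (h1.symm)
          · exact Or.inr (Or.inr (Or.inr (Or.inl (rfl))))
          · exact Or.inr (Or.inr (Or.inr (Or.inr (rfl))))
        · rintro (rfl | rfl | rfl | rfl | rfl)
          · exact Or.inl (rfl)
          · exact Or.inr (Or.inl (rfl))
          · exact Or.inr (Or.inr (Or.inl (rfl)))
          · exact Or.inr (Or.inr (Or.inr (Or.inr (Or.inl (rfl)))))
          · exact Or.inr (Or.inr (Or.inr (Or.inr (Or.inr (rfl)))))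
      have eS : {B' : Set V | (Q1 = R1 ∧ B' = Q1) ∨ (Q2 = R2 ∧ B' = Q2) ∨
          (Q3 = R3 ∧ B' = Q3)} = {Q1} := by
        ext t
        simp only [Set.mem_setOf_eq, Set.mem_insert_iff, Set.mem_singleton_iff]
        constructor
        · rintro (⟨hm, rfl⟩ | ⟨hm, rfl⟩ | ⟨hm, rfl⟩)
          · exact rfl
          · exact absurd hm h2
          · exact absurd hm h3
        · rintro (rfl)
          · exact Or.inl (⟨h1, rfl⟩)
      rw [eA, eS, ncard5 dQ12 dQ13 dQ1R2 dQ1R3 dQ23 h2 dQ2R3 dQ3R2 h3 dR23, Set.ncard_singleton]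
    · have eA : ({Q1, Q2, Q3, R1, R2, R3} : Set (Set V)) = {Q1, Q2, Q3, R1} := by
        ext t
        simp only [Set.mem_insert_iff, Set.mem_singleton_iff]
        constructor
        · rintro (rfl | rfl | rfl | rfl | rfl | rfl)
          · exact Or.inl (rfl)
          · exact Or.inr (Or.inl (rfl))
          · exact Or.inr (Or.inr (Or.inl (rfl)))
          · exact Or.inr (Or.inr (Or.inr (rfl)))
          · exact Or.inr (Or.inl (h2.symm))
          · exact Or.inr (Or.inr (Or.inl (h3.symm)))
        · rintro (rfl | rfl | rfl | rfl)
          · exact Or.inl (rfl)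
          · exact Or.inr (Or.inl (rfl))
          · exact Or.inr (Or.inr (Or.inl (rfl)))
          · exact Or.inr (Or.inr (Or.inr (Or.inl (rfl))))
      have eS : {B' : Set V | (Q1 = R1 ∧ B' = Q1) ∨ (Q2 = R2 ∧ B' = Q2) ∨
          (Q3 = R3 ∧ B' = Q3)} = {Q2, Q3} := by
        ext t
        simp only [Set.mem_setOf_eq, Set.mem_insert_iff, Set.mem_singleton_iff]
        constructor
        · rintro (⟨hm, rfl⟩ | ⟨hm, rfl⟩ | ⟨hm, rfl⟩)
          · exact absurd hm h1
          · exact Or.inl (rfl)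
          · exact Or.inr (rfl)
        · rintro (rfl | rfl)
          · exact Or.inr (Or.inl (⟨h2, rfl⟩))
          · exact Or.inr (Or.inr (⟨h3, rfl⟩))
      rw [eA, eS, ncard4 dQ12 dQ13 h1 dQ23 dQ2R1 dQ3R1, Set.ncard_pair dQ23]
    · have eA : ({Q1, Q2, Q3, R1, R2, R3} : Set (Set V)) = {Q1, Q2, Q3, R1, R3} := by
        ext t
        simp only [Set.mem_insert_iff, Set.mem_singleton_iff]
        constructor
        · rintro (rfl | rfl | rfl | rfl | rfl | rfl)
          · exact Or.inl (rfl)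
          · exact Or.inr (Or.inl (rfl))
          · exact Or.inr (Or.inr (Or.inl (rfl)))
          · exact Or.inr (Or.inr (Or.inr (Or.inl (rfl))))
          · exact Or.inr (Or.inl (h2.symm))
          · exact Or.inr (Or.inr (Or.inr (Or.inr (rfl))))
        · rintro (rfl | rfl | rfl | rfl | rfl)
          · exact Or.inl (rfl)
          · exact Or.inr (Or.inl (rfl))
          · exact Or.inr (Or.inr (Or.inl (rfl)))
          · exact Or.inr (Or.inr (Or.inr (Or.inl (rfl))))
          · exact Or.inr (Or.inr (Or.inr (Or.inr (Or.inr (rfl)))))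
      have eS : {B' : Set V | (Q1 = R1 ∧ B' = Q1) ∨ (Q2 = R2 ∧ B' = Q2) ∨
          (Q3 = R3 ∧ B' = Q3)} = {Q2} := by
        ext t
        simp only [Set.mem_setOf_eq, Set.mem_insert_iff, Set.mem_singleton_iff]
        constructor
        · rintro (⟨hm, rfl⟩ | ⟨hm, rfl⟩ | ⟨hm, rfl⟩)
          · exact absurd hm h1
          · exact rfl
          · exact absurd hm h3
        · rintro (rfl)
          · exact Or.inr (Or.inl (⟨h2, rfl⟩))
      rw [eA, eS, ncard5 dQ12 dQ13 h1 dQ1R3 dQ23 dQ2R1 dQ2R3 dQ3R1 h3 dR13, Set.ncard_singleton]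
    · have eA : ({Q1, Q2, Q3, R1, R2, R3} : Set (Set V)) = {Q1, Q2, Q3, R1, R2} := by
        ext t
        simp only [Set.mem_insert_iff, Set.mem_singleton_iff]
        constructor
        · rintro (rfl | rfl | rfl | rfl | rfl | rfl)
          · exact Or.inl (rfl)
          · exact Or.inr (Or.inl (rfl))
          · exact Or.inr (Or.inr (Or.inl (rfl)))
          · exact Or.inr (Or.inr (Or.inr (Or.inl (rfl))))
          · exact Or.inr (Or.inr (Or.inr (Or.inr (rfl))))
          · exact Or.inr (Or.inr (Or.inl (h3.symm)))
        · rintro (rfl | rfl | rfl | rfl | rfl)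
          · exact Or.inl (rfl)
          · exact Or.inr (Or.inl (rfl))
          · exact Or.inr (Or.inr (Or.inl (rfl)))
          · exact Or.inr (Or.inr (Or.inr (Or.inl (rfl))))
          · exact Or.inr (Or.inr (Or.inr (Or.inr (Or.inl (rfl)))))
      have eS : {B' : Set V | (Q1 = R1 ∧ B' = Q1) ∨ (Q2 = R2 ∧ B' = Q2) ∨
          (Q3 = R3 ∧ B' = Q3)} = {Q3} := by
        ext t
        simp only [Set.mem_setOf_eq, Set.mem_insert_iff, Set.mem_singleton_iff]
        constructor
        · rintro (⟨hm, rfl⟩ | ⟨hm, rfl⟩ | ⟨hm, rfl⟩)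
          · exact absurd hm h1
          · exact absurd hm h2
          · exact rfl
        · rintro (rfl)
          · exact Or.inr (Or.inr (⟨h3, rfl⟩))
      rw [eA, eS, ncard5 dQ12 dQ13 h1 dQ1R2 dQ23 dQ2R1 h2 dQ3R1 dQ3R2 dR12, Set.ncard_singleton]
    · have eA : ({Q1, Q2, Q3, R1, R2, R3} : Set (Set V)) = {Q1, Q2, Q3, R1, R2, R3} := rfl
      have eS : {B' : Set V | (Q1 = R1 ∧ B' = Q1) ∨ (Q2 = R2 ∧ B' = Q2) ∨
          (Q3 = R3 ∧ B' = Q3)} = (∅ : Set (Set V)) := by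
        ext t
        simp only [Set.mem_setOf_eq, Set.mem_empty_iff_false, iff_false]
        rintro (⟨hm, _⟩ | ⟨hm, _⟩ | ⟨hm, _⟩)
        · exact h1 hm
        · exact h2 hm
        · exact h3 hm
      rw [eA, eS, ncard6 dQ12 dQ13 h1 dQ1R2 dQ1R3 dQ23 dQ2R1 h2 dQ2R3 dQ3R1 dQ3R2 h3 dR12 dR13 dR23, Set.ncard_empty]
end

section
/- For every natural number N there exists a finite connected bichromatic graph Γ that is locally like W(F4) and has more than N vertices; in particular, there exist infinitely many pairwise non-isomorphic finite connected bichromatic graphs that are locally like W(F4). -/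
set_option maxRecDepth 10000


def arow : Fin 24 → ℕ := ![64526, 50125, 13115, 3319, 15777836, 1032220, 13381770, 3354698, 11144710, 5573894, 3934985, 12781321, 5906629, 10817733, 6717491, 10043443, 6859424, 9722272, 9594464, 6395232, 8820368, 4810128, 2710096, 1485136]
def grow : Fin 24 → ℕ := ![1571535570949668, 1555624312440228, 19207619286660, 237131284356, 60642436133340489712644, 9243688266521416260, 60078079491226745743692, 741704695118816260428, 53950349254915980986220, 5994483250657797210636, 845933364786485206972, 67949279342647495064668, 6973129941326330255308, 62697834953832899950012, 7441426830247078747492, 62109464164223547847636, 448483403413638772164, 49831489463450567796, 35451885979971519766308, 3939099052288553095428, 70903572285341135102292, 7878174713455849902180, 880755390469351014948, 97862335358118401124]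
def hrow : Fin 24 → ℕ := ![401619652081, 400855182480, 391665954912, 272019565536, 655846555454, 526629090878, 875980593828, 756334204452, 1091544072802, 976683221026, 1311120743048, 1210584651272, 1535857164870, 1430551461894, 1755640835140, 1650335132164, 2144445336142, 2034170610767, 1919708885516, 1809434187789, 2579967691314, 2470075171891, 2364404183536, 2254511691761]
def fm : Fin 24 → ℕ := ![0, 0, 0, 0, 15777792, 1032192, 0, 0, 0, 0, 0, 0, 0, 0, 0, 0, 0, 0, 0, 0, 0, 0, 0, 0]
def c0 : Fin 24 → Bool := fun v => Nat.testBit 16711695 (v : ℕ)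


def fInt (v w : Fin 24) : ℤ :=
  (if (fm v).testBit w then 1 else 0) - (if (fm w).testBit v then 1 else 0)

def Abool (v w : Fin 24) : Bool := (arow v).testBit w

def fz (k : ℕ) (v w : Fin 24) : ZMod k := ((fInt v w : ℤ) : ZMod k)

def Gm (v w : Fin 24) : Fin 3 × Fin 3 :=
  (⟨grow v / 9 ^ (w : ℕ) % 9 / 3, by omega⟩, ⟨grow v / 9 ^ (w : ℕ) % 9 % 3, by omega⟩)

def Hm (v : Fin 24) (p : Fin 3 × Fin 3) : Fin 24 :=
  ⟨hrow v / 24 ^ (3 * (p.1 : ℕ) + (p.2 : ℕ)) % 24, by omega⟩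

lemma fInt_antisymm (v w : Fin 24) : fInt w v = - fInt v w := by
  unfold fInt; ring

lemma fz_antisymm (k : ℕ) (v w : Fin 24) : fz k w v = - fz k v w := by
  unfold fz; rw [fInt_antisymm]; push_cast; ring

lemma abool_symm : ∀ v w : Fin 24, Abool v w = true → Abool w v = true := by decide

lemma abool_irrefl : ∀ v : Fin 24, Abool v v = false := by decide

lemma cocycle : ∀ v w u : Fin 24, Abool v w = true → Abool v u = true → Abool w u = true →
    fInt v u = fInt v w + fInt w u := by decide

lemma fact4 : ∀ (v : Fin 24) (p : Fin 3 × Fin 3), Abool v (Hm v p) = true := by decide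

lemma fact5 : ∀ v w : Fin 24, Abool v w = true → Hm v (Gm v w) = w := by decide

lemma fact6 : ∀ (v : Fin 24) (p : Fin 3 × Fin 3), Gm v (Hm v p) = p := by decide

def wbBool (p q : Fin 3 × Fin 3) : Bool :=
  decide (p ≠ q) && ((decide (p.1 ≠ q.1) && decide (p.1 ≠ q.2) && decide (p.2 ≠ q.1)
    && decide (p.2 ≠ q.2)) || (decide (q.1 = p.2) && decide (q.2 = p.1)))

lemma fact7 : ∀ v w u : Fin 24, Abool v w = true → Abool v u = true →
    wbBool (Gm v w) (Gm v u) = Abool w u := by decide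

lemma fact8s : ∀ v w : Fin 24, c0 v = true → Abool v w = true →
    WBcolor 3 (Gm v w) = c0 w := by decide

lemma fact8l : ∀ v w : Fin 24, c0 v = false → Abool v w = true →
    WCcolor 3 (Gm v w) = c0 w := by decide

lemma fv1 : fInt 4 14 = 1 := by decide
lemma fv2 : fInt 14 0 = 0 := by decide
lemma fv3 : fInt 0 2 = 0 := by decide
lemma fv4 : fInt 2 4 = 0 := by decide

lemma wb_adj_iff (p q : Fin 3 × Fin 3) : (WB 3).Adj p q ↔ wbBool p q = true := by
  have hset : ∀ a b c d : Fin 3, (({a, b} : Set (Fin 3)) ∩ {c, d} = ∅) ↔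
      (a ≠ c ∧ a ≠ d ∧ b ≠ c ∧ b ≠ d) := by
    intro a b c d
    constructor
    · intro h
      rw [Set.eq_empty_iff_forall_notMem] at h
      refine ⟨?_, ?_, ?_, ?_⟩ <;> intro he
      · exact h a ⟨by simp, by simp [he]⟩
      · exact h a ⟨by simp, by simp [he]⟩
      · exact h b ⟨by simp, by simp [he]⟩
      · exact h b ⟨by simp, by simp [he]⟩
    · rintro ⟨h1, h2, h3, h4⟩
      rw [Set.eq_empty_iff_forall_notMem]
      rintro x ⟨hx1, hx2⟩
      simp only [Set.mem_insert_iff, Set.mem_singleton_iff] at hx1 hx2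
      rcases hx1 with rfl | rfl <;> rcases hx2 with rfl | rfl <;> simp_all
  show (p ≠ q ∧ _) ↔ _
  rw [hset]
  unfold wbBool
  simp only [Bool.and_eq_true, Bool.or_eq_true, decide_eq_true_eq]
  tauto

def Cov (k : ℕ) : SimpleGraph (Fin 24 × ZMod k) where
  Adj p q := Abool p.1 q.1 = true ∧ q.2 = p.2 + fz k p.1 q.1
  symm := by
    constructor
    rintro ⟨v, a⟩ ⟨w, b⟩ ⟨h1, h2⟩
    exact ⟨abool_symm v w h1, by rw [h2, fz_antisymm]; ring⟩
  loopless := by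
    constructor
    rintro ⟨v, a⟩ ⟨h1, -⟩
    rw [abool_irrefl] at h1
    exact Bool.false_ne_true h1

lemma fz_cocycle (k : ℕ) {v w u : Fin 24} (h1 : Abool v w = true)
    (h2 : Abool v u = true) (h3 : Abool w u = true) :
    fz k v u = fz k v w + fz k w u := by
  unfold fz; rw [cocycle v w u h1 h2 h3]; push_cast; ring

def nbhdIso (k : ℕ) (v : Fin 24) (a : ZMod k) :
    ((Cov k).induce ((Cov k).neighborSet (v, a))) ≃g WB 3 where
  toFun := fun x => Gm v x.1.1
  invFun := fun p => ⟨(Hm v p, a + fz k v (Hm v p)), fact4 v p, rfl⟩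
  left_inv := by
    rintro ⟨⟨w, b⟩, hw, hb⟩
    apply Subtype.ext
    have h5 := fact5 v w hw
    have hb' : b = a + fz k v w := hb
    show (Hm v (Gm v w), a + fz k v (Hm v (Gm v w))) = (w, b)
    rw [h5, hb']
  right_inv := fun p => fact6 v p
  map_rel_iff' := by
    rintro ⟨⟨w, b⟩, hw, hb⟩ ⟨⟨u, c⟩, hu, hc⟩
    show (WB 3).Adj (Gm v w) (Gm v u) ↔ (Cov k).Adj (w, b) (u, c)
    rw [wb_adj_iff, fact7 v w u hw hu]
    constructor
    · intro h
      refine ⟨h, ?_⟩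
      have hb' : b = a + fz k v w := hb
      have hc' : c = a + fz k v u := hc
      have hw' : Abool v w = true := hw
      have hu' : Abool v u = true := hu
      show c = b + fz k w u
      rw [hb', hc', fz_cocycle k hw' hu' h]
      ring
    · exact fun h => h.1

lemma cov_locally (k : ℕ) : LocallyLikeWF4 (Cov k) (fun p => c0 p.1) := by
  rintro ⟨v, a⟩
  constructor
  · intro hv
    refine ⟨nbhdIso k v a, ?_⟩
    rintro ⟨⟨w, b⟩, hw, hb⟩
    exact fact8s v w hv hw
  · intro hv
    refine ⟨nbhdIso k v a, ?_⟩
    rintro ⟨⟨w, b⟩, hw, hb⟩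
    exact fact8l v w hv hw

lemma reach_shift {k : ℕ} (t : ZMod k) {x y : Fin 24 × ZMod k}
    (h : (Cov k).Reachable x y) :
    (Cov k).Reachable (x.1, x.2 + t) (y.1, y.2 + t) := by
  obtain ⟨p⟩ := h
  induction p with
  | nil => exact SimpleGraph.Reachable.refl _
  | @cons a b c h' p' ih =>
    have step : (Cov k).Adj (a.1, a.2 + t) (b.1, b.2 + t) :=
      show Abool a.1 b.1 = true ∧ b.2 + t = a.2 + t + fz k a.1 b.1 from
        ⟨h'.1, by rw [show b.2 = a.2 + fz k a.1 b.1 from h'.2]; ring⟩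
    exact step.reachable.trans ih

lemma cov_adj (k : ℕ) (v w : Fin 24) (a b : ZMod k) (h1 : Abool v w = true)
    (h2 : b = a + fz k v w) : (Cov k).Adj (v, a) (w, b) :=
  show Abool v w = true ∧ b = a + fz k v w from ⟨h1, h2⟩

lemma loop_step (k : ℕ) (a : ZMod k) : (Cov k).Reachable (4, a) (4, a + 1) := by
  have s1 := cov_adj k 4 14 a (a + fz k 4 14) (by decide) rfl
  have s2 := cov_adj k 14 0 (a + fz k 4 14) (a + fz k 4 14 + fz k 14 0) (by decide) rfl
  have s3 := cov_adj k 0 2 (a + fz k 4 14 + fz k 14 0)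
      (a + fz k 4 14 + fz k 14 0 + fz k 0 2) (by decide) rfl
  have s4 := cov_adj k 2 4 (a + fz k 4 14 + fz k 14 0 + fz k 0 2)
      (a + fz k 4 14 + fz k 14 0 + fz k 0 2 + fz k 2 4) (by decide) rfl
  have hend : a + fz k 4 14 + fz k 14 0 + fz k 0 2 + fz k 2 4 = a + 1 := by
    unfold fz
    rw [fv1, fv2, fv3, fv4]
    push_cast
    ring
  rw [hend] at s4
  exact s1.reachable.trans (s2.reachable.trans (s3.reachable.trans s4.reachable))

lemma loop_nat (k : ℕ) (a : ZMod k) (m : ℕ) : (Cov k).Reachable (4, a) (4, a + m) := by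
  induction m with
  | zero => simpa using SimpleGraph.Reachable.refl ((4 : Fin 24), a)
  | succ n ih =>
    have h2 := loop_step k (a + n)
    have h3 : ((n + 1 : ℕ) : ZMod k) = (n : ZMod k) + 1 := by push_cast; ring
    rw [h3, ← add_assoc]
    exact ih.trans h2

lemma tree_reach (k : ℕ) : ∀ w : Fin 24, ∃ c : ZMod k, ∀ a : ZMod k,
    (Cov k).Reachable (4, a) (w, a + c) := by
  have h4 : ∃ c : ZMod k, ∀ a : ZMod k, (Cov k).Reachable (4, a) (4, a + c) :=
    ⟨0, fun a => by rw [add_zero]⟩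
  have h2 : ∃ c : ZMod k, ∀ a : ZMod k, (Cov k).Reachable (4, a) (2, a + c) := by
    obtain ⟨c, hc⟩ := h4
    refine ⟨c + fz k 4 2, fun a => (hc a).trans (SimpleGraph.Adj.reachable ?_)⟩
    exact cov_adj k 4 2 (a + c) (a + (c + fz k 4 2)) (by decide) (by ring)
  have h3 : ∃ c : ZMod k, ∀ a : ZMod k, (Cov k).Reachable (4, a) (3, a + c) := by
    obtain ⟨c, hc⟩ := h4
    refine ⟨c + fz k 4 3, fun a => (hc a).trans (SimpleGraph.Adj.reachable ?_)⟩
    exact cov_adj k 4 3 (a + c) (a + (c + fz k 4 3)) (by decide) (by ring)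
  have h5 : ∃ c : ZMod k, ∀ a : ZMod k, (Cov k).Reachable (4, a) (5, a + c) := by
    obtain ⟨c, hc⟩ := h4
    refine ⟨c + fz k 4 5, fun a => (hc a).trans (SimpleGraph.Adj.reachable ?_)⟩
    exact cov_adj k 4 5 (a + c) (a + (c + fz k 4 5)) (by decide) (by ring)
  have h14 : ∃ c : ZMod k, ∀ a : ZMod k, (Cov k).Reachable (4, a) (14, a + c) := by
    obtain ⟨c, hc⟩ := h4
    refine ⟨c + fz k 4 14, fun a => (hc a).trans (SimpleGraph.Adj.reachable ?_)⟩
    exact cov_adj k 4 14 (a + c) (a + (c + fz k 4 14)) (by decide) (by ring)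
  have h15 : ∃ c : ZMod k, ∀ a : ZMod k, (Cov k).Reachable (4, a) (15, a + c) := by
    obtain ⟨c, hc⟩ := h4
    refine ⟨c + fz k 4 15, fun a => (hc a).trans (SimpleGraph.Adj.reachable ?_)⟩
    exact cov_adj k 4 15 (a + c) (a + (c + fz k 4 15)) (by decide) (by ring)
  have h20 : ∃ c : ZMod k, ∀ a : ZMod k, (Cov k).Reachable (4, a) (20, a + c) := by
    obtain ⟨c, hc⟩ := h4
    refine ⟨c + fz k 4 20, fun a => (hc a).trans (SimpleGraph.Adj.reachable ?_)⟩
    exact cov_adj k 4 20 (a + c) (a + (c + fz k 4 20)) (by decide) (by ring)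
  have h21 : ∃ c : ZMod k, ∀ a : ZMod k, (Cov k).Reachable (4, a) (21, a + c) := by
    obtain ⟨c, hc⟩ := h4
    refine ⟨c + fz k 4 21, fun a => (hc a).trans (SimpleGraph.Adj.reachable ?_)⟩
    exact cov_adj k 4 21 (a + c) (a + (c + fz k 4 21)) (by decide) (by ring)
  have h22 : ∃ c : ZMod k, ∀ a : ZMod k, (Cov k).Reachable (4, a) (22, a + c) := by
    obtain ⟨c, hc⟩ := h4
    refine ⟨c + fz k 4 22, fun a => (hc a).trans (SimpleGraph.Adj.reachable ?_)⟩
    exact cov_adj k 4 22 (a + c) (a + (c + fz k 4 22)) (by decide) (by ring)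
  have h23 : ∃ c : ZMod k, ∀ a : ZMod k, (Cov k).Reachable (4, a) (23, a + c) := by
    obtain ⟨c, hc⟩ := h4
    refine ⟨c + fz k 4 23, fun a => (hc a).trans (SimpleGraph.Adj.reachable ?_)⟩
    exact cov_adj k 4 23 (a + c) (a + (c + fz k 4 23)) (by decide) (by ring)
  have h0 : ∃ c : ZMod k, ∀ a : ZMod k, (Cov k).Reachable (4, a) (0, a + c) := by
    obtain ⟨c, hc⟩ := h2
    refine ⟨c + fz k 2 0, fun a => (hc a).trans (SimpleGraph.Adj.reachable ?_)⟩
    exact cov_adj k 2 0 (a + c) (a + (c + fz k 2 0)) (by decide) (by ring)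
  have h1 : ∃ c : ZMod k, ∀ a : ZMod k, (Cov k).Reachable (4, a) (1, a + c) := by
    obtain ⟨c, hc⟩ := h2
    refine ⟨c + fz k 2 1, fun a => (hc a).trans (SimpleGraph.Adj.reachable ?_)⟩
    exact cov_adj k 2 1 (a + c) (a + (c + fz k 2 1)) (by decide) (by ring)
  have h8 : ∃ c : ZMod k, ∀ a : ZMod k, (Cov k).Reachable (4, a) (8, a + c) := by
    obtain ⟨c, hc⟩ := h2
    refine ⟨c + fz k 2 8, fun a => (hc a).trans (SimpleGraph.Adj.reachable ?_)⟩
    exact cov_adj k 2 8 (a + c) (a + (c + fz k 2 8)) (by decide) (by ring)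
  have h9 : ∃ c : ZMod k, ∀ a : ZMod k, (Cov k).Reachable (4, a) (9, a + c) := by
    obtain ⟨c, hc⟩ := h2
    refine ⟨c + fz k 2 9, fun a => (hc a).trans (SimpleGraph.Adj.reachable ?_)⟩
    exact cov_adj k 2 9 (a + c) (a + (c + fz k 2 9)) (by decide) (by ring)
  have h12 : ∃ c : ZMod k, ∀ a : ZMod k, (Cov k).Reachable (4, a) (12, a + c) := by
    obtain ⟨c, hc⟩ := h2
    refine ⟨c + fz k 2 12, fun a => (hc a).trans (SimpleGraph.Adj.reachable ?_)⟩
    exact cov_adj k 2 12 (a + c) (a + (c + fz k 2 12)) (by decide) (by ring)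
  have h13 : ∃ c : ZMod k, ∀ a : ZMod k, (Cov k).Reachable (4, a) (13, a + c) := by
    obtain ⟨c, hc⟩ := h2
    refine ⟨c + fz k 2 13, fun a => (hc a).trans (SimpleGraph.Adj.reachable ?_)⟩
    exact cov_adj k 2 13 (a + c) (a + (c + fz k 2 13)) (by decide) (by ring)
  have h6 : ∃ c : ZMod k, ∀ a : ZMod k, (Cov k).Reachable (4, a) (6, a + c) := by
    obtain ⟨c, hc⟩ := h3
    refine ⟨c + fz k 3 6, fun a => (hc a).trans (SimpleGraph.Adj.reachable ?_)⟩
    exact cov_adj k 3 6 (a + c) (a + (c + fz k 3 6)) (by decide) (by ring)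
  have h7 : ∃ c : ZMod k, ∀ a : ZMod k, (Cov k).Reachable (4, a) (7, a + c) := by
    obtain ⟨c, hc⟩ := h3
    refine ⟨c + fz k 3 7, fun a => (hc a).trans (SimpleGraph.Adj.reachable ?_)⟩
    exact cov_adj k 3 7 (a + c) (a + (c + fz k 3 7)) (by decide) (by ring)
  have h10 : ∃ c : ZMod k, ∀ a : ZMod k, (Cov k).Reachable (4, a) (10, a + c) := by
    obtain ⟨c, hc⟩ := h3
    refine ⟨c + fz k 3 10, fun a => (hc a).trans (SimpleGraph.Adj.reachable ?_)⟩
    exact cov_adj k 3 10 (a + c) (a + (c + fz k 3 10)) (by decide) (by ring)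
  have h11 : ∃ c : ZMod k, ∀ a : ZMod k, (Cov k).Reachable (4, a) (11, a + c) := by
    obtain ⟨c, hc⟩ := h3
    refine ⟨c + fz k 3 11, fun a => (hc a).trans (SimpleGraph.Adj.reachable ?_)⟩
    exact cov_adj k 3 11 (a + c) (a + (c + fz k 3 11)) (by decide) (by ring)
  have h16 : ∃ c : ZMod k, ∀ a : ZMod k, (Cov k).Reachable (4, a) (16, a + c) := by
    obtain ⟨c, hc⟩ := h5
    refine ⟨c + fz k 5 16, fun a => (hc a).trans (SimpleGraph.Adj.reachable ?_)⟩
    exact cov_adj k 5 16 (a + c) (a + (c + fz k 5 16)) (by decide) (by ring)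
  have h17 : ∃ c : ZMod k, ∀ a : ZMod k, (Cov k).Reachable (4, a) (17, a + c) := by
    obtain ⟨c, hc⟩ := h5
    refine ⟨c + fz k 5 17, fun a => (hc a).trans (SimpleGraph.Adj.reachable ?_)⟩
    exact cov_adj k 5 17 (a + c) (a + (c + fz k 5 17)) (by decide) (by ring)
  have h18 : ∃ c : ZMod k, ∀ a : ZMod k, (Cov k).Reachable (4, a) (18, a + c) := by
    obtain ⟨c, hc⟩ := h5
    refine ⟨c + fz k 5 18, fun a => (hc a).trans (SimpleGraph.Adj.reachable ?_)⟩
    exact cov_adj k 5 18 (a + c) (a + (c + fz k 5 18)) (by decide) (by ring)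
  have h19 : ∃ c : ZMod k, ∀ a : ZMod k, (Cov k).Reachable (4, a) (19, a + c) := by
    obtain ⟨c, hc⟩ := h5
    refine ⟨c + fz k 5 19, fun a => (hc a).trans (SimpleGraph.Adj.reachable ?_)⟩
    exact cov_adj k 5 19 (a + c) (a + (c + fz k 5 19)) (by decide) (by ring)
  intro w
  fin_cases w
  exacts [h0, h1, h2, h3, h4, h5, h6, h7, h8, h9, h10, h11, h12, h13, h14, h15,
    h16, h17, h18, h19, h20, h21, h22, h23]

lemma reach_base (k : ℕ) [NeZero k] (x : Fin 24 × ZMod k) :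
    (Cov k).Reachable (4, 0) x := by
  obtain ⟨v, a⟩ := x
  obtain ⟨c, hc⟩ := tree_reach k v
  have h1 : (Cov k).Reachable (4, (0 : ZMod k)) (4, a - c) := by
    have := loop_nat k 0 ((a - c).val)
    rwa [zero_add, ZMod.natCast_rightInverse _] at this
  refine h1.trans ?_
  have := hc (a - c)
  rwa [sub_add_cancel] at this

lemma cov_connected (k : ℕ) [NeZero k] : (Cov k).Connected := by
  rw [SimpleGraph.connected_iff]
  exact ⟨fun x y => (reach_base k x).symm.trans (reach_base k y), ⟨(4, 0)⟩⟩

lemma card_cov (k : ℕ) [NeZero k] : Nat.card (Fin 24 × ZMod k) = 24 * k := by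
  rw [Nat.card_prod, Nat.card_eq_fintype_card, Fintype.card_fin, Nat.card_zmod]

theorem infinitely_many_locally_WF4 :
    (∀ N : ℕ, ∃ (V : Type) (G : SimpleGraph V) (c : V → Bool),
      Finite V ∧ G.Connected ∧ LocallyLikeWF4 G c ∧ N < Nat.card V) ∧
    ∃ (V : ℕ → Type) (G : ∀ i, SimpleGraph (V i)) (c : ∀ i, V i → Bool),
      (∀ i, Finite (V i) ∧ (G i).Connected ∧ LocallyLikeWF4 (G i) (c i)) ∧
      ∀ i j, i ≠ j → ¬ BIso (G i) (c i) (G j) (c j) := by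

  constructor
  · intro N
    haveI : NeZero (N + 1) := ⟨N.succ_ne_zero⟩
    refine ⟨Fin 24 × ZMod (N + 1), Cov (N + 1), fun p => c0 p.1, inferInstance,
      cov_connected (N + 1), cov_locally (N + 1), ?_⟩
    rw [card_cov]
    omega
  · refine ⟨fun i => Fin 24 × ZMod (i + 1), fun i => Cov (i + 1), fun i p => c0 p.1,
      fun i => ?_, fun i j hij => ?_⟩
    · haveI : NeZero (i + 1) := ⟨i.succ_ne_zero⟩
      exact ⟨inferInstance, cov_connected _, cov_locally _⟩
    · rintro ⟨e, -⟩
      haveI : NeZero (i + 1) := ⟨i.succ_ne_zero⟩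
      haveI : NeZero (j + 1) := ⟨j.succ_ne_zero⟩
      have h := Nat.card_congr e.toEquiv
      rw [card_cov, card_cov] at h
      omega
end
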